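/- arXiv:0805.2136 — 2 statements merged into one kernel-verified Lean document; each statement's English description precedes it below -/
import Mathlib

section
/- (Convolution Lemma, case 0 ≤ α < 1/2.) Let α ∈ [0,1/2) and let a : ℤ → ℂ be a two-sided sequence with ‖a‖²_{h^{−α}} = Σ_{k∈ℤ} (1+2|k|)^{−2α} |a(k)|² < ∞. Then for every n ∈ ℤ the series Σ_{k∈ℤ, k≠n, k≠−n} a(n−k)·a(n+k)/(n²−k²) converges absolutely, and the sequence ω defined by ω(n) = (1/π²) Σ_{k∈ℤ, k≠±n} a(n−k)·a(n+k)/(n²−k²) belongs to h^{1−α}. Moreover there is a constant C depending only on α such that ‖ω‖_{h^{1−α}} ≤ C ‖a‖²_{h^{−α}}. -/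
set_option maxHeartbeats 4000000

open Filter Real

namespace Stmt4Aux

noncomputable def w (m : ℤ) : ℝ := 1 + 2 * |(m : ℝ)|

lemma w_pos (m : ℤ) : 0 < w m := by unfold w; positivity

lemma one_le_w (m : ℤ) : 1 ≤ w m := by
  unfold w; have := abs_nonneg ((m : ℝ)); linarith

lemma w_le (m : ℤ) (hm : m ≠ 0) : w m ≤ 3 * |(m : ℝ)| := by
  have h1 : (1 : ℝ) ≤ |(m : ℝ)| := by
    rw [← Int.cast_abs]; exact_mod_cast Int.one_le_abs hm
  unfold w; linarith

lemma rpow_sq {x : ℝ} (hx : 0 < x) (t : ℝ) : (x ^ t) ^ 2 = x ^ (2 * t) := by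
  rw [sq, ← Real.rpow_add hx]; ring_nf

/-- Cauchy–Schwarz for tsums of nonnegative sequences. -/
lemma cs (f g : ℤ → ℝ) (hf0 : ∀ k, 0 ≤ f k) (hg0 : ∀ k, 0 ≤ g k)
    (hf2 : Summable fun k => f k ^ 2) (hg2 : Summable fun k => g k ^ 2) :
    Summable (fun k => f k * g k) ∧
      (∑' k, f k * g k) ^ 2 ≤ (∑' k, f k ^ 2) * (∑' k, g k ^ 2) := by
  have hsum : Summable (fun k => f k * g k) := by
    apply Summable.of_nonneg_of_le (fun k => mul_nonneg (hf0 k) (hg0 k))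
      (fun k => ?_) (((hf2.add hg2).div_const 2))
    have := sq_nonneg (f k - g k)
    show f k * g k ≤ (f k ^ 2 + g k ^ 2) / 2
    nlinarith [hf0 k, hg0 k]
  have hX : 0 ≤ (∑' k, f k ^ 2) * (∑' k, g k ^ 2) :=
    mul_nonneg (tsum_nonneg fun k => sq_nonneg _) (tsum_nonneg fun k => sq_nonneg _)
  refine ⟨hsum, ?_⟩
  have hle : ∑' k, f k * g k ≤ Real.sqrt ((∑' k, f k ^ 2) * (∑' k, g k ^ 2)) := by
    apply Summable.tsum_le_of_sum_le hsum
    intro s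
    rw [Real.le_sqrt (Finset.sum_nonneg fun k _ => mul_nonneg (hf0 k) (hg0 k)) hX]
    calc (∑ k ∈ s, f k * g k) ^ 2 ≤ (∑ k ∈ s, f k ^ 2) * ∑ k ∈ s, g k ^ 2 :=
          Finset.sum_mul_sq_le_sq_mul_sq s f g
      _ ≤ (∑' k, f k ^ 2) * (∑' k, g k ^ 2) := by
          apply mul_le_mul (Summable.sum_le_tsum s (fun k _ => sq_nonneg _) hf2)
            (Summable.sum_le_tsum s (fun k _ => sq_nonneg _) hg2)
            (Finset.sum_nonneg fun k _ => sq_nonneg _) (tsum_nonneg fun k => sq_nonneg _)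
  calc (∑' k, f k * g k) ^ 2 ≤ Real.sqrt ((∑' k, f k ^ 2) * (∑' k, g k ^ 2)) ^ 2 := by
        apply pow_le_pow_left₀ (tsum_nonneg fun k => mul_nonneg (hf0 k) (hg0 k)) hle
    _ = _ := Real.sq_sqrt hX

lemma hE {α : ℝ} (hα : α < 1 / 2) : Summable (fun m : ℤ => w m ^ (2 * (α - 1))) := by
  have hs : 1 < 2 - 2 * α := by linarith
  have h := (Real.summable_one_div_int_add_rpow (1/2) (2 - 2*α)).mpr hs
  apply Summable.of_nonneg_of_le (fun m => Real.rpow_nonneg (w_pos m).le _) (fun m => ?_) h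
  have hm0 : (0 : ℝ) < |(m : ℝ) + 1/2| := by
    rw [abs_pos]
    intro hc
    have : ((2 * m + 1 : ℤ) : ℝ) = 0 := by push_cast; linarith
    have : (2 * m + 1 : ℤ) = 0 := by exact_mod_cast this
    omega
  have hmw : |(m : ℝ) + 1/2| ≤ w m := by
    unfold w
    have h5 := abs_add_le (m : ℝ) (1/2)
    have h6 : |(1:ℝ)/2| = 1/2 := by norm_num
    have h7 := abs_nonneg ((m : ℝ))
    rw [h6] at h5
    linarith
  have h1 : |(m : ℝ) + 1/2| ^ (2 - 2*α) ≤ w m ^ (2 - 2*α) :=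
    Real.rpow_le_rpow hm0.le hmw (by linarith)
  have h2 : w m ^ (2 * (α - 1)) = 1 / w m ^ (2 - 2*α) := by
    rw [one_div, ← Real.rpow_neg (w_pos m).le]; ring_nf
  rw [h2]
  apply div_le_div_of_nonneg_left one_pos.le (Real.rpow_pos_of_pos hm0 _) h1

/-- The key weight inequality, assuming `|l| ≤ |m|`. -/
lemma key_half {α : ℝ} (hα0 : 0 ≤ α) (hα1 : α ≤ 1) (n m l : ℤ) (hm : m ≠ 0) (hl : l ≠ 0)
    (h2n : m + l = 2 * n) (hle : |l| ≤ |m|) :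
    w n ^ (1 - α) * (w m ^ α * w l ^ α) / (|(m : ℝ)| * |(l : ℝ)|) ≤ 9 * w l ^ (α - 1) := by
  have hm0 : (0 : ℝ) < |(m : ℝ)| := by
    rw [abs_pos]; exact_mod_cast hm
  have hl0 : (0 : ℝ) < |(l : ℝ)| := by
    rw [abs_pos]; exact_mod_cast hl
  have hnm : |n| ≤ |m| := by
    have h4 : |2*n| ≤ |m| + |l| := h2n ▸ abs_add_le m l
    have h5 : |2*n| = 2 * |n| := by rw [abs_mul]; norm_num
    omega
  have hwnm : w n ≤ w m := by
    unfold w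
    have : |(n : ℝ)| ≤ |(m : ℝ)| := by rw [← Int.cast_abs, ← Int.cast_abs]; exact_mod_cast hnm
    linarith
  have h1 : w n ^ (1 - α) ≤ w m ^ (1 - α) :=
    Real.rpow_le_rpow (w_pos n).le hwnm (by linarith)
  have hmm : w m ^ (1 - α) * w m ^ α = w m := by
    rw [← Real.rpow_add (w_pos m)]; norm_num
  have h2 : w m / |(m : ℝ)| ≤ 3 := by
    rw [div_le_iff₀ hm0]; exact w_le m hm
  have h3 : w l ^ α / |(l : ℝ)| ≤ 3 * w l ^ (α - 1) := by
    have : w l ^ (α - 1) = w l ^ α / w l := by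
      rw [Real.rpow_sub (w_pos l), Real.rpow_one]
    have hwa : 0 ≤ w l ^ α := Real.rpow_nonneg (w_pos l).le α
    rw [this, show 3 * (w l ^ α / w l) = (3 * w l ^ α) / w l by ring,
      div_le_div_iff₀ hl0 (w_pos l)]
    calc w l ^ α * w l ≤ w l ^ α * (3 * |(l:ℝ)|) :=
          mul_le_mul_of_nonneg_left (w_le l hl) hwa
      _ = 3 * w l ^ α * |(l:ℝ)| := by ring
  calc w n ^ (1 - α) * (w m ^ α * w l ^ α) / (|(m : ℝ)| * |(l : ℝ)|)
      ≤ w m ^ (1 - α) * (w m ^ α * w l ^ α) / (|(m : ℝ)| * |(l : ℝ)|) := by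
        have hx : 0 ≤ w m ^ α * w l ^ α :=
          mul_nonneg (Real.rpow_nonneg (w_pos m).le _) (Real.rpow_nonneg (w_pos l).le _)
        gcongr
    _ = (w m ^ (1 - α) * w m ^ α) * w l ^ α / (|(m : ℝ)| * |(l:ℝ)|) := by ring
    _ = w m * w l ^ α / (|(m : ℝ)| * |(l:ℝ)|) := by rw [hmm]
    _ = (w m / |(m:ℝ)|) * (w l ^ α / |(l:ℝ)|) := by ring
    _ ≤ 3 * (3 * w l ^ (α - 1)) := by
        apply mul_le_mul h2 h3 (div_nonneg (Real.rpow_nonneg (w_pos l).le _) (abs_nonneg _))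
          (by norm_num)
    _ = 9 * w l ^ (α - 1) := by ring


lemma key {α : ℝ} (hα0 : 0 ≤ α) (hα1 : α ≤ 1) (n m l : ℤ) (hm : m ≠ 0) (hl : l ≠ 0)
    (h2n : m + l = 2 * n) :
    w n ^ (1 - α) * (w m ^ α * w l ^ α) / (|(m : ℝ)| * |(l : ℝ)|)
      ≤ 9 * (w m ^ (α - 1) + w l ^ (α - 1)) := by
  have hm' : 0 ≤ w m ^ (α - 1) := Real.rpow_nonneg (w_pos m).le _
  have hl' : 0 ≤ w l ^ (α - 1) := Real.rpow_nonneg (w_pos l).le _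
  rcases le_total |l| |m| with h | h
  · have := key_half hα0 hα1 n m l hm hl h2n h
    linarith
  · have h2 := key_half hα0 hα1 n l m hl hm (by omega) h
    calc w n ^ (1 - α) * (w m ^ α * w l ^ α) / (|(m : ℝ)| * |(l : ℝ)|)
        = w n ^ (1 - α) * (w l ^ α * w m ^ α) / (|(l : ℝ)| * |(m : ℝ)|) := by ring
      _ ≤ 9 * w m ^ (α - 1) := h2
      _ ≤ 9 * (w m ^ (α - 1) + w l ^ (α - 1)) := by linarith

lemma wpow_le {α : ℝ} (hα1 : α ≤ 1) (m : ℤ) (hm : m ≠ 0) : w m ^ α ≤ 3 * |(m : ℝ)| :=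
  le_trans (le_of_le_of_eq (Real.rpow_le_rpow_of_exponent_le (one_le_w m) hα1)
    (Real.rpow_one _)) (w_le m hm)

noncomputable def bb (α : ℝ) (a : ℤ → ℂ) (k : ℤ) : ℝ := w k ^ (-α) * ‖a k‖

noncomputable def cc (α : ℝ) (a : ℤ → ℂ) (k : ℤ) : ℝ := w k ^ (α - 1) * bb α a k

noncomputable def DD (α : ℝ) (a : ℤ → ℂ) (n : ℤ) : ℝ := ∑' k, cc α a (n - k) * bb α a (n + k)

noncomputable def GG (α : ℝ) (a : ℤ → ℂ) (n : ℤ) : ℝ :=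
  ∑' k, cc α a (n - k) * bb α a (n + k) ^ 2

end Stmt4Aux


section Main
open Stmt4Aux

/-- Convolution Lemma, case `0 ≤ α < 1/2`: the quadratic convolution
`ω(n) = (1/π²) Σ_{k ≠ ±n} a(n-k) a(n+k)/(n²-k²)` of a sequence `a ∈ h^{-α}`
belongs to `h^{1-α}`, with `‖ω‖_{h^{1-α}} ≤ C ‖a‖²_{h^{-α}}` for a constant `C = C(α)`. -/
theorem stmt_4 (α : ℝ) (hα0 : 0 ≤ α) (hα : α < 1 / 2) :
    ∃ C : ℝ, ∀ a : ℤ → ℂ,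
      Summable (fun k : ℤ => (1 + 2 * |(k : ℝ)|) ^ (-(2 * α)) * ‖a k‖ ^ 2) →
      (∀ n : ℤ, Summable fun k : ℤ =>
          ‖if k = n ∨ k = -n then (0 : ℂ)
            else a (n - k) * a (n + k) / ((n : ℂ) ^ 2 - (k : ℂ) ^ 2)‖) ∧
      Summable (fun n : ℤ => (1 + 2 * |(n : ℝ)|) ^ (2 * (1 - α)) *
          ‖(1 / (π : ℂ) ^ 2) * ∑' k : ℤ,
            (if k = n ∨ k = -n then (0 : ℂ)
              else a (n - k) * a (n + k) / ((n : ℂ) ^ 2 - (k : ℂ) ^ 2))‖ ^ 2) ∧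
      (∑' n : ℤ, (1 + 2 * |(n : ℝ)|) ^ (2 * (1 - α)) *
          ‖(1 / (π : ℂ) ^ 2) * ∑' k : ℤ,
            (if k = n ∨ k = -n then (0 : ℂ)
              else a (n - k) * a (n + k) / ((n : ℂ) ^ 2 - (k : ℂ) ^ 2))‖ ^ 2) ^ (1 / 2 : ℝ)
        ≤ C * ∑' k : ℤ, (1 + 2 * |(k : ℝ)|) ^ (-(2 * α)) * ‖a k‖ ^ 2 := by
  have hα1 : α ≤ 1 := by linarith
  have hEs := Stmt4Aux.hE hα
  set E : ℝ := ∑' m : ℤ, w m ^ (2 * (α - 1)) with hEdef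
  have hE0 : 0 ≤ E := tsum_nonneg fun m => Real.rpow_nonneg (w_pos m).le _
  refine ⟨18 * Real.sqrt E, ?_⟩
  intro a ha
  set b : ℤ → ℝ := bb α a with hbdef
  set c : ℤ → ℝ := cc α a with hcdef
  set D : ℤ → ℝ := DD α a with hDdef
  set G : ℤ → ℝ := GG α a with hGdef
  have hb0 : ∀ k, 0 ≤ b k := fun k =>
    mul_nonneg (Real.rpow_nonneg (w_pos k).le _) (norm_nonneg _)
  have hc0 : ∀ k, 0 ≤ c k := fun k =>
    mul_nonneg (Real.rpow_nonneg (w_pos k).le _) (hb0 k)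
  have hbsq : ∀ k, b k ^ 2 = (1 + 2 * |(k : ℝ)|) ^ (-(2 * α)) * ‖a k‖ ^ 2 := by
    intro k
    show (w k ^ (-α) * ‖a k‖) ^ 2 = _
    rw [mul_pow, Stmt4Aux.rpow_sq (w_pos k), show (2 : ℝ) * -α = -(2 * α) from by ring]
    rfl
  have hb2 : Summable (fun k => b k ^ 2) := by
    apply ha.congr
    exact fun k => (hbsq k).symm
  set S : ℝ := ∑' k : ℤ, (1 + 2 * |(k : ℝ)|) ^ (-(2 * α)) * ‖a k‖ ^ 2 with hSdef
  have hS0 : 0 ≤ S := by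
    rw [hSdef]
    exact tsum_nonneg fun k => mul_nonneg (Real.rpow_nonneg (by positivity) _) (by positivity)
  have hb2S : ∑' k, b k ^ 2 = S := by rw [hSdef]; exact tsum_congr hbsq
  have hbS : ∀ k, b k ^ 2 ≤ S := fun k =>
    le_of_le_of_eq (Summable.le_tsum hb2 k fun j _ => sq_nonneg _) hb2S
  have hbsqrt : ∀ k, b k ≤ Real.sqrt S := by
    intro k
    rw [← Real.sqrt_sq (hb0 k)]
    exact Real.sqrt_le_sqrt (hbS k)
  have hwa : ∀ m : ℤ, ‖a m‖ = b m * w m ^ α := by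
    intro m
    have hne : w m ^ α ≠ 0 := ne_of_gt (Real.rpow_pos_of_pos (w_pos m) α)
    show ‖a m‖ = w m ^ (-α) * ‖a m‖ * w m ^ α
    rw [Real.rpow_neg (w_pos m).le]
    field_simp
  -- the ℓ¹ bound on c
  have hf2 : Summable (fun k : ℤ => (w k ^ (α - 1)) ^ 2) :=
    hEs.congr fun k => (Stmt4Aux.rpow_sq (w_pos k) (α - 1)).symm
  obtain ⟨hc, hcsq⟩ := Stmt4Aux.cs (fun k => w k ^ (α - 1)) b
    (fun k => Real.rpow_nonneg (w_pos k).le _) hb0 hf2 hb2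
  have hcc : Summable c := hc
  have hL2 : (∑' k, c k) ^ 2 ≤ E * S := by
    calc (∑' k, c k) ^ 2 ≤ (∑' k, (w k ^ (α - 1)) ^ 2) * (∑' k, b k ^ 2) := hcsq
      _ = E * S := by
          rw [hb2S, hEdef]
          congr 1
          exact tsum_congr fun k => Stmt4Aux.rpow_sq (w_pos k) (α - 1)
  set L : ℝ := ∑' k, c k with hLdef
  have hL0 : 0 ≤ L := tsum_nonneg hc0
  -- norm of each term
  have hTval : ∀ n k : ℤ, ¬(k = n ∨ k = -n) →
      ‖a (n - k) * a (n + k) / ((n : ℂ) ^ 2 - (k : ℂ) ^ 2)‖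
        = (b (n - k) * w (n - k) ^ α) * (b (n + k) * w (n + k) ^ α)
          / (|((n - k : ℤ) : ℝ)| * |((n + k : ℤ) : ℝ)|) := by
    intro n k _
    have hcast : (n : ℂ) ^ 2 - (k : ℂ) ^ 2 = (((n - k) * (n + k) : ℤ) : ℂ) := by
      push_cast; ring
    rw [norm_div, norm_mul, hcast, Complex.norm_intCast, ← hwa, ← hwa, Int.cast_mul, abs_mul]
  -- Claim 1
  have hsummT : ∀ n : ℤ, Summable fun k : ℤ =>
      ‖if k = n ∨ k = -n then (0 : ℂ)
        else a (n - k) * a (n + k) / ((n : ℂ) ^ 2 - (k : ℂ) ^ 2)‖ := by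
    intro n
    have hmaj : Summable (fun k : ℤ => (9 : ℝ) / 2 * (b (n - k) ^ 2 + b (n + k) ^ 2)) :=
      ((hb2.comp_injective (sub_right_injective : Function.Injective fun k : ℤ => n - k)).add
        (hb2.comp_injective (add_right_injective n))).mul_left _
    apply Summable.of_nonneg_of_le (fun k => norm_nonneg _) ?_ hmaj
    intro k
    by_cases hk : k = n ∨ k = -n
    · rw [if_pos hk, norm_zero]
      have := sq_nonneg (b (n - k)); have := sq_nonneg (b (n + k)); linarith
    · rw [if_neg hk, hTval n k hk]
      obtain ⟨hk1, hk2⟩ := not_or.mp hk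
      have hm : n - k ≠ 0 := by omega
      have hl : n + k ≠ 0 := by omega
      have hm0 : (0 : ℝ) < |((n - k : ℤ) : ℝ)| := by rw [abs_pos]; exact_mod_cast hm
      have hl0 : (0 : ℝ) < |((n + k : ℤ) : ℝ)| := by rw [abs_pos]; exact_mod_cast hl
      rw [div_le_iff₀ (by positivity)]
      have h2ab : b (n - k) * b (n + k) ≤ (b (n - k) ^ 2 + b (n + k) ^ 2) / 2 := by
        nlinarith [sq_nonneg (b (n - k) - b (n + k))]
      calc (b (n - k) * w (n - k) ^ α) * (b (n + k) * w (n + k) ^ α)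
          = (b (n - k) * b (n + k)) * (w (n - k) ^ α * w (n + k) ^ α) := by ring
        _ ≤ (b (n - k) * b (n + k)) * ((3 * |((n - k : ℤ) : ℝ)|) * (3 * |((n + k : ℤ) : ℝ)|)) := by
            apply mul_le_mul_of_nonneg_left ?_ (mul_nonneg (hb0 _) (hb0 _))
            exact mul_le_mul (wpow_le hα1 _ hm) (wpow_le hα1 _ hl)
              (Real.rpow_nonneg (w_pos _).le _) (by positivity)
        _ = (b (n - k) * b (n + k)) * 9 * (|((n - k : ℤ) : ℝ)| * |((n + k : ℤ) : ℝ)|) := by ring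
        _ ≤ ((b (n - k) ^ 2 + b (n + k) ^ 2) / 2) * 9
              * (|((n - k : ℤ) : ℝ)| * |((n + k : ℤ) : ℝ)|) := by
            apply mul_le_mul_of_nonneg_right
              (mul_le_mul_of_nonneg_right h2ab (by norm_num)) (by positivity)
        _ = 9 / 2 * (b (n - k) ^ 2 + b (n + k) ^ 2)
              * (|((n - k : ℤ) : ℝ)| * |((n + k : ℤ) : ℝ)|) := by ring
  -- summability of convolution pieces
  have hDs : ∀ n : ℤ, Summable (fun k : ℤ => c (n - k) * b (n + k)) := by
    intro n
    apply Summable.of_nonneg_of_le (fun k => mul_nonneg (hc0 _) (hb0 _)) (fun k => ?_)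
      ((hcc.comp_injective (sub_right_injective : Function.Injective fun k : ℤ => n - k)).mul_right
        (Real.sqrt S))
    exact mul_le_mul_of_nonneg_left (hbsqrt _) (hc0 _)
  have hDs2 : ∀ n : ℤ, Summable (fun k : ℤ => b (n - k) * c (n + k)) := by
    intro n
    apply Summable.of_nonneg_of_le (fun k => mul_nonneg (hb0 _) (hc0 _)) (fun k => ?_)
      (((hcc.comp_injective (add_right_injective n)).mul_left (Real.sqrt S)))
    calc b (n - k) * c (n + k) ≤ Real.sqrt S * c (n + k) :=
          mul_le_mul_of_nonneg_right (hbsqrt _) (hc0 _)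
      _ = Real.sqrt S * c (n + k) := rfl
  have hD0 : ∀ n, 0 ≤ D n := fun n => tsum_nonneg fun k => mul_nonneg (hc0 _) (hb0 _)
  -- Cauchy-Schwarz for D
  have hDsq : ∀ n, D n ^ 2 ≤ L * G n := by
    intro n
    have hf0 : ∀ k : ℤ, 0 ≤ Real.sqrt (c (n - k)) := fun k => Real.sqrt_nonneg _
    have hg0 : ∀ k : ℤ, 0 ≤ Real.sqrt (c (n - k)) * b (n + k) :=
      fun k => mul_nonneg (Real.sqrt_nonneg _) (hb0 _)
    have hf2' : Summable (fun k : ℤ => Real.sqrt (c (n - k)) ^ 2) := by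
      apply Summable.congr (hcc.comp_injective
        (sub_right_injective : Function.Injective fun k : ℤ => n - k))
      exact fun k => (Real.sq_sqrt (hc0 _)).symm
    have hg2' : Summable (fun k : ℤ => (Real.sqrt (c (n - k)) * b (n + k)) ^ 2) := by
      apply Summable.of_nonneg_of_le (fun k => sq_nonneg _) (fun k => ?_)
        ((hcc.comp_injective
          (sub_right_injective : Function.Injective fun k : ℤ => n - k)).mul_right S)
      rw [mul_pow, Real.sq_sqrt (hc0 _)]
      exact mul_le_mul_of_nonneg_left (hbS _) (hc0 _)
    obtain ⟨_, hineq⟩ := Stmt4Aux.cs _ _ hf0 hg0 hf2' hg2'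
    have e1 : ∑' k : ℤ, Real.sqrt (c (n - k)) * (Real.sqrt (c (n - k)) * b (n + k)) = D n := by
      rw [hDdef]
      apply tsum_congr
      intro k
      rw [← mul_assoc, Real.mul_self_sqrt (hc0 _)]
    have e2 : ∑' k : ℤ, Real.sqrt (c (n - k)) ^ 2 = L := by
      rw [tsum_congr (fun k => Real.sq_sqrt (hc0 (n - k)))]
      simpa using (Equiv.subLeft n).tsum_eq c
    have e3 : ∑' k : ℤ, (Real.sqrt (c (n - k)) * b (n + k)) ^ 2 = G n := by
      rw [hGdef]
      apply tsum_congr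
      intro k
      rw [mul_pow, Real.sq_sqrt (hc0 _)]
    rw [e1, e2, e3] at hineq
    exact hineq
  -- double sum estimate
  have hΦ : Summable (fun p : ℤ × ℤ => c p.1 * b p.2 ^ 2) :=
    hcc.mul_of_nonneg hb2 (fun k => hc0 k) (fun k => sq_nonneg _)
  have hψ : Function.Injective (fun p : ℤ × ℤ => (p.1 - p.2, p.1 + p.2) : ℤ × ℤ → ℤ × ℤ) := by
    intro p q h
    simp only [Prod.mk.injEq] at h
    obtain ⟨h1, h2⟩ := h
    have : p.1 = q.1 := by omega
    have : p.2 = q.2 := by omega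
    exact Prod.ext (by omega) (by omega)
  have hΦψ0 := hΦ.comp_injective hψ
  have hΦψ : Summable (fun p : ℤ × ℤ => c (p.1 - p.2) * b (p.1 + p.2) ^ 2) :=
    hΦψ0.congr (fun p => rfl)
  have hGsum : HasSum G (∑' p : ℤ × ℤ, c (p.1 - p.2) * b (p.1 + p.2) ^ 2) := by
    apply HasSum.prod_fiberwise hΦψ.hasSum
    intro n
    exact (hΦψ.prod_factor n).hasSum
  have hGsummable : Summable G := hGsum.summable
  have hGle : ∑' n, G n ≤ L * S := by
    rw [hGsum.tsum_eq]
    calc ∑' p : ℤ × ℤ, c (p.1 - p.2) * b (p.1 + p.2) ^ 2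
        ≤ ∑' p : ℤ × ℤ, c p.1 * b p.2 ^ 2 :=
          Summable.tsum_le_tsum_of_inj _ hψ (fun p _ => mul_nonneg (hc0 _) (sq_nonneg _))
            (fun p => le_rfl) hΦψ hΦ
      _ = L * S := by
          rw [Summable.tsum_prod' hΦ (fun m => hΦ.prod_factor m)]
          calc ∑' (m : ℤ), ∑' (l : ℤ), c m * b l ^ 2
              = ∑' (m : ℤ), c m * ∑' (l : ℤ), b l ^ 2 := tsum_congr fun m => tsum_mul_left
            _ = L * S := by rw [hb2S, hLdef, ← tsum_mul_right]
  have hDsqsum : Summable (fun n => D n ^ 2) :=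
    Summable.of_nonneg_of_le (fun n => sq_nonneg _) hDsq (hGsummable.mul_left L)
  have hD2le : ∑' n, D n ^ 2 ≤ L * (L * S) := by
    calc ∑' n, D n ^ 2 ≤ ∑' n, L * G n :=
          Summable.tsum_le_tsum hDsq hDsqsum (hGsummable.mul_left L)
      _ = L * ∑' n, G n := tsum_mul_left
      _ ≤ L * (L * S) := mul_le_mul_of_nonneg_left hGle hL0
  -- key tsum bound
  have hkeyT : ∀ n : ℤ, w n ^ (1 - α) *
      (∑' k : ℤ, ‖if k = n ∨ k = -n then (0 : ℂ)
        else a (n - k) * a (n + k) / ((n : ℂ) ^ 2 - (k : ℂ) ^ 2)‖) ≤ 18 * D n := by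
    intro n
    have hpoint : ∀ k : ℤ, w n ^ (1 - α) *
        ‖if k = n ∨ k = -n then (0 : ℂ)
          else a (n - k) * a (n + k) / ((n : ℂ) ^ 2 - (k : ℂ) ^ 2)‖
        ≤ 9 * (c (n - k) * b (n + k)) + 9 * (b (n - k) * c (n + k)) := by
      intro k
      by_cases hk : k = n ∨ k = -n
      · rw [if_pos hk, norm_zero, mul_zero]
        have := mul_nonneg (hc0 (n - k)) (hb0 (n + k))
        have := mul_nonneg (hb0 (n - k)) (hc0 (n + k))
        linarith
      · obtain ⟨hk1, hk2⟩ := not_or.mp hk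
        have hm : n - k ≠ 0 := by omega
        have hl : n + k ≠ 0 := by omega
        rw [if_neg hk, hTval n k hk]
        have hkey := Stmt4Aux.key hα0 hα1 n (n - k) (n + k) hm hl (by ring)
        calc w n ^ (1 - α) * ((b (n - k) * w (n - k) ^ α) * (b (n + k) * w (n + k) ^ α)
              / (|((n - k : ℤ) : ℝ)| * |((n + k : ℤ) : ℝ)|))
            = (b (n - k) * b (n + k)) * (w n ^ (1 - α) * (w (n - k) ^ α * w (n + k) ^ α)
              / (|((n - k : ℤ) : ℝ)| * |((n + k : ℤ) : ℝ)|)) := by ring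
          _ ≤ (b (n - k) * b (n + k)) * (9 * (w (n - k) ^ (α - 1) + w (n + k) ^ (α - 1))) :=
              mul_le_mul_of_nonneg_left hkey (mul_nonneg (hb0 _) (hb0 _))
          _ = 9 * (c (n - k) * b (n + k)) + 9 * (b (n - k) * c (n + k)) := by
              rw [hcdef]
              show _ = 9 * ((w (n-k) ^ (α-1) * b (n-k)) * b (n + k))
                + 9 * (b (n - k) * (w (n+k) ^ (α-1) * b (n+k)))
              ring
    have hmirror : ∑' k : ℤ, b (n - k) * c (n + k) = D n := by
      have h1 : ∑' k : ℤ, b (n + k) * c (n - k) = ∑' k : ℤ, b (n - k) * c (n + k) := by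
        have := (Equiv.neg ℤ).tsum_eq (fun k => b (n - k) * c (n + k))
        simpa [sub_neg_eq_add, ← sub_eq_add_neg] using this
      rw [← h1, hDdef]
      exact tsum_congr fun k => mul_comm _ _
    calc w n ^ (1 - α) * (∑' k : ℤ, ‖if k = n ∨ k = -n then (0 : ℂ)
            else a (n - k) * a (n + k) / ((n : ℂ) ^ 2 - (k : ℂ) ^ 2)‖)
        = ∑' k : ℤ, w n ^ (1 - α) * ‖if k = n ∨ k = -n then (0 : ℂ)
            else a (n - k) * a (n + k) / ((n : ℂ) ^ 2 - (k : ℂ) ^ 2)‖ := tsum_mul_left.symm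
      _ ≤ ∑' k : ℤ, (9 * (c (n - k) * b (n + k)) + 9 * (b (n - k) * c (n + k))) :=
          Summable.tsum_le_tsum hpoint ((hsummT n).mul_left _)
            (((hDs n).mul_left 9).add ((hDs2 n).mul_left 9))
      _ = 9 * D n + 9 * ∑' k : ℤ, b (n - k) * c (n + k) := by
          rw [Summable.tsum_add ((hDs n).mul_left 9) ((hDs2 n).mul_left 9), tsum_mul_left,
            tsum_mul_left]
          rfl
      _ = 18 * D n := by rw [hmirror]; ring
  -- pointwise bound on the weighted squares
  have hpi : ‖(1 / (π : ℂ) ^ 2)‖ ≤ 1 := by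
    rw [norm_div, norm_one, norm_pow, Complex.norm_real, Real.norm_eq_abs,
      abs_of_nonneg Real.pi_pos.le, div_le_one (by positivity)]
    nlinarith [Real.pi_gt_three]
  have hF : ∀ n : ℤ, (1 + 2 * |(n : ℝ)|) ^ (2 * (1 - α)) *
      ‖(1 / (π : ℂ) ^ 2) * ∑' k : ℤ,
        (if k = n ∨ k = -n then (0 : ℂ)
          else a (n - k) * a (n + k) / ((n : ℂ) ^ 2 - (k : ℂ) ^ 2))‖ ^ 2
      ≤ 324 * D n ^ 2 := by
    intro n
    have h1 : ‖(1 / (π : ℂ) ^ 2) * ∑' k : ℤ,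
        (if k = n ∨ k = -n then (0 : ℂ)
          else a (n - k) * a (n + k) / ((n : ℂ) ^ 2 - (k : ℂ) ^ 2))‖
        ≤ ∑' k : ℤ, ‖if k = n ∨ k = -n then (0 : ℂ)
          else a (n - k) * a (n + k) / ((n : ℂ) ^ 2 - (k : ℂ) ^ 2)‖ := by
      rw [norm_mul]
      calc ‖(1 / (π : ℂ) ^ 2)‖ * ‖∑' k : ℤ, (if k = n ∨ k = -n then (0 : ℂ)
              else a (n - k) * a (n + k) / ((n : ℂ) ^ 2 - (k : ℂ) ^ 2))‖
          ≤ 1 * ‖∑' k : ℤ, (if k = n ∨ k = -n then (0 : ℂ)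
              else a (n - k) * a (n + k) / ((n : ℂ) ^ 2 - (k : ℂ) ^ 2))‖ :=
            mul_le_mul_of_nonneg_right hpi (norm_nonneg _)
        _ = _ := one_mul _
        _ ≤ _ := norm_tsum_le_tsum_norm (hsummT n)
    have h2 : w n ^ (1 - α) * ‖(1 / (π : ℂ) ^ 2) * ∑' k : ℤ,
        (if k = n ∨ k = -n then (0 : ℂ)
          else a (n - k) * a (n + k) / ((n : ℂ) ^ 2 - (k : ℂ) ^ 2))‖ ≤ 18 * D n :=
      le_trans (mul_le_mul_of_nonneg_left h1 (Real.rpow_nonneg (w_pos n).le _)) (hkeyT n)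
    have h3 : (0 : ℝ) ≤ w n ^ (1 - α) * ‖(1 / (π : ℂ) ^ 2) * ∑' k : ℤ,
        (if k = n ∨ k = -n then (0 : ℂ)
          else a (n - k) * a (n + k) / ((n : ℂ) ^ 2 - (k : ℂ) ^ 2))‖ :=
      mul_nonneg (Real.rpow_nonneg (w_pos n).le _) (norm_nonneg _)
    have heq : (1 + 2 * |(n : ℝ)|) ^ (2 * (1 - α)) *
        ‖(1 / (π : ℂ) ^ 2) * ∑' k : ℤ,
          (if k = n ∨ k = -n then (0 : ℂ)
            else a (n - k) * a (n + k) / ((n : ℂ) ^ 2 - (k : ℂ) ^ 2))‖ ^ 2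
        = (w n ^ (1 - α) * ‖(1 / (π : ℂ) ^ 2) * ∑' k : ℤ,
          (if k = n ∨ k = -n then (0 : ℂ)
            else a (n - k) * a (n + k) / ((n : ℂ) ^ 2 - (k : ℂ) ^ 2))‖) ^ 2 := by
      rw [mul_pow, Stmt4Aux.rpow_sq (w_pos n)]
      rfl
    rw [heq]
    calc (w n ^ (1 - α) * ‖(1 / (π : ℂ) ^ 2) * ∑' k : ℤ,
          (if k = n ∨ k = -n then (0 : ℂ)
            else a (n - k) * a (n + k) / ((n : ℂ) ^ 2 - (k : ℂ) ^ 2))‖) ^ 2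
        ≤ (18 * D n) ^ 2 := pow_le_pow_left₀ h3 h2 2
      _ = 324 * D n ^ 2 := by ring
  refine ⟨hsummT, ?_, ?_⟩
  · exact Summable.of_nonneg_of_le
      (fun n => mul_nonneg (Real.rpow_nonneg (by positivity) _) (sq_nonneg _)) hF
      (hDsqsum.mul_left 324)
  · have hFsummable : Summable (fun n : ℤ => (1 + 2 * |(n : ℝ)|) ^ (2 * (1 - α)) *
        ‖(1 / (π : ℂ) ^ 2) * ∑' k : ℤ,
          (if k = n ∨ k = -n then (0 : ℂ)
            else a (n - k) * a (n + k) / ((n : ℂ) ^ 2 - (k : ℂ) ^ 2))‖ ^ 2) :=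
      Summable.of_nonneg_of_le
        (fun n => mul_nonneg (Real.rpow_nonneg (by positivity) _) (sq_nonneg _)) hF
        (hDsqsum.mul_left 324)
    have htsumF : (∑' n : ℤ, (1 + 2 * |(n : ℝ)|) ^ (2 * (1 - α)) *
        ‖(1 / (π : ℂ) ^ 2) * ∑' k : ℤ,
          (if k = n ∨ k = -n then (0 : ℂ)
            else a (n - k) * a (n + k) / ((n : ℂ) ^ 2 - (k : ℂ) ^ 2))‖ ^ 2)
        ≤ 324 * (E * S ^ 2) := by
      calc (∑' n : ℤ, (1 + 2 * |(n : ℝ)|) ^ (2 * (1 - α)) *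
            ‖(1 / (π : ℂ) ^ 2) * ∑' k : ℤ,
              (if k = n ∨ k = -n then (0 : ℂ)
                else a (n - k) * a (n + k) / ((n : ℂ) ^ 2 - (k : ℂ) ^ 2))‖ ^ 2)
          ≤ ∑' n : ℤ, 324 * D n ^ 2 :=
            Summable.tsum_le_tsum hF hFsummable (hDsqsum.mul_left 324)
        _ = 324 * ∑' n : ℤ, D n ^ 2 := tsum_mul_left
        _ ≤ 324 * (L * (L * S)) := mul_le_mul_of_nonneg_left hD2le (by norm_num)
        _ ≤ 324 * (E * S ^ 2) := by
            have h := mul_le_mul_of_nonneg_right hL2 hS0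
            nlinarith
    calc (∑' n : ℤ, (1 + 2 * |(n : ℝ)|) ^ (2 * (1 - α)) *
          ‖(1 / (π : ℂ) ^ 2) * ∑' k : ℤ,
            (if k = n ∨ k = -n then (0 : ℂ)
              else a (n - k) * a (n + k) / ((n : ℂ) ^ 2 - (k : ℂ) ^ 2))‖ ^ 2) ^ (1 / 2 : ℝ)
        ≤ (324 * (E * S ^ 2)) ^ (1 / 2 : ℝ) := by
          apply Real.rpow_le_rpow
            (tsum_nonneg fun n =>
              mul_nonneg (Real.rpow_nonneg (by positivity) _) (sq_nonneg _))
            htsumF (by norm_num)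
      _ = 18 * Real.sqrt E * S := by
          rw [← Real.sqrt_eq_rpow]
          rw [show (324 : ℝ) * (E * S ^ 2) = (18 * Real.sqrt E * S) ^ 2 from by
            rw [mul_pow, mul_pow, Real.sq_sqrt hE0]; ring]
          exact Real.sqrt_sq (by positivity)
      _ = 18 * Real.sqrt E * S := by ring

end Main
end

section
/- (Convolution Lemma, case 1/2 ≤ α < 1.) Let α ∈ [1/2,1), let δ > 0, and let a : ℤ → ℂ be a two-sided sequence with ‖a‖²_{h^{−α}} = Σ_{k∈ℤ} (1+2|k|)^{−2α} |a(k)|² < ∞. Then for every n ∈ ℤ the series Σ_{k∈ℤ, k≠n, k≠−n} a(n−k)·a(n+k)/(n²−k²) converges absolutely, and the sequence ω defined by ω(n) = (1/π²) Σ_{k∈ℤ, k≠±n} a(n−k)·a(n+k)/(n²−k²) belongs to h^{3/2−2α−δ}. Moreover there is a constant C depending only on α and δ such that ‖ω‖_{h^{3/2−2α−δ}} ≤ C ‖a‖²_{h^{−α}}. -/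
open Filter Real MeasureTheory
open scoped ENNReal

namespace Stmt5Aux

noncomputable section



lemma holder2 {p q : ℝ} (hpq : p.HolderConjugate q) (f g : ℤ → ℝ≥0∞) :
    ∑' i, f i * g i ≤ (∑' i, f i ^ p) ^ (1 / p) * (∑' i, g i ^ q) ^ (1 / q) := by
  have h := ENNReal.lintegral_mul_le_Lp_mul_Lq (Measure.count (α := ℤ)) hpq
      (measurable_of_countable f).aemeasurable (measurable_of_countable g).aemeasurable
  simp only [Pi.mul_apply, lintegral_count] at h
  exact h

lemma holder3 {A B C : ℝ} (hA : 0 < A) (hB : 0 < B) (hC : 0 < C) (hABC : A + B + C = 1)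
    (f g h : ℤ → ℝ≥0∞) :
    ∑' i, f i * g i * h i ≤
      (∑' i, f i ^ (1 / A)) ^ A * (∑' i, g i ^ (1 / B)) ^ B * (∑' i, h i ^ (1 / C)) ^ C := by
  have hBC : 0 < B + C := by linarith
  have h1 : Real.HolderConjugate (1 / A) (1 / (B + C)) := by
    rw [Real.holderConjugate_iff]; constructor
    · rw [lt_div_iff₀ hA, one_mul]; linarith
    · simp only [one_div, inv_inv]; linarith
  have h2 : Real.HolderConjugate ((B + C) / B) ((B + C) / C) := by
    rw [Real.holderConjugate_iff]; constructor
    · rw [lt_div_iff₀ hB, one_mul]; linarith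
    · rw [inv_div, inv_div]; field_simp
  have step1 : ∑' i, f i * g i * h i ≤
      (∑' i, f i ^ (1 / A)) ^ A * (∑' i, (g i * h i) ^ (1 / (B + C))) ^ (B + C) := by
    have := holder2 h1 f (fun i => g i * h i)
    simpa [one_div_one_div, mul_assoc] using this
  have step2 : ∑' i, (g i * h i) ^ (1 / (B + C)) ≤
      (∑' i, g i ^ (1 / B)) ^ (B / (B + C)) * (∑' i, h i ^ (1 / C)) ^ (C / (B + C)) := by
    have heq : ∀ i, (g i * h i) ^ (1 / (B + C)) =
        (g i ^ (1 / (B + C))) * (h i ^ (1 / (B + C))) := fun i =>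
      ENNReal.mul_rpow_of_nonneg _ _ (by positivity)
    rw [tsum_congr heq]
    have := holder2 h2 (fun i => g i ^ (1 / (B + C))) (fun i => h i ^ (1 / (B + C)))
    have e1 : ∀ i, (g i ^ (1 / (B + C))) ^ ((B + C) / B) = g i ^ (1 / B) := by
      intro i
      rw [← ENNReal.rpow_mul]
      congr 1
      field_simp
    have e2 : ∀ i, (h i ^ (1 / (B + C))) ^ ((B + C) / C) = h i ^ (1 / C) := by
      intro i
      rw [← ENNReal.rpow_mul]
      congr 1
      field_simp
    have e3 : 1 / ((B + C) / B) = B / (B + C) := by rw [one_div_div]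
    have e4 : 1 / ((B + C) / C) = C / (B + C) := by rw [one_div_div]
    simp only [e1, e2, e3, e4] at this
    exact this
  calc ∑' i, f i * g i * h i
      ≤ (∑' i, f i ^ (1 / A)) ^ A * (∑' i, (g i * h i) ^ (1 / (B + C))) ^ (B + C) := step1
    _ ≤ (∑' i, f i ^ (1 / A)) ^ A *
        ((∑' i, g i ^ (1 / B)) ^ (B / (B + C)) * (∑' i, h i ^ (1 / C)) ^ (C / (B + C))) ^ (B + C) := by
        exact mul_le_mul_right (ENNReal.rpow_le_rpow step2 hBC.le) _
    _ = (∑' i, f i ^ (1 / A)) ^ A * ((∑' i, g i ^ (1 / B)) ^ B * (∑' i, h i ^ (1 / C)) ^ C) := by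
        rw [ENNReal.mul_rpow_of_nonneg _ _ hBC.le, ← ENNReal.rpow_mul, ← ENNReal.rpow_mul,
          div_mul_cancel₀ _ hBC.ne', div_mul_cancel₀ _ hBC.ne']
    _ = _ := by ring





lemma young {p q t : ℝ} (hp : 1 ≤ p) (hq : 1 ≤ q) (hpt : p < t) (hqt : q < t)
    (hpqt : 1 / p + 1 / q = 1 + 1 / t) (u v : ℤ → ℝ≥0∞) :
    (∑' m : ℤ, (∑' j : ℤ, u j * v (m - j)) ^ t) ^ (1 / t) ≤
      (∑' j, u j ^ p) ^ (1 / p) * (∑' j, v j ^ q) ^ (1 / q) := by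
  have hp0 : 0 < p := by linarith
  have hq0 : 0 < q := by linarith
  have ht0 : 0 < t := by linarith
  set A := 1 / t with hA_def
  set B := 1 / p - 1 / t with hB_def
  set C := 1 / q - 1 / t with hC_def
  have hA : 0 < A := by positivity
  have hB : 0 < B := by
    have : 1 / t < 1 / p := one_div_lt_one_div_of_lt hp0 hpt
    simp only [hB_def]; linarith
  have hC : 0 < C := by
    have : 1 / t < 1 / q := one_div_lt_one_div_of_lt hq0 hqt
    simp only [hC_def]; linarith
  have hABC : A + B + C = 1 := by simp only [hA_def, hB_def, hC_def]; linarith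
  set Up := ∑' j, u j ^ p with hUp_def
  set Vq := ∑' j, v j ^ q with hVq_def
  -- pointwise splitting identity
  have hsplit : ∀ (x y : ℝ≥0∞), x * y = (x ^ p * y ^ q) ^ A * (x ^ p) ^ B * (y ^ q) ^ C := by
    intro x y
    rw [ENNReal.mul_rpow_of_nonneg _ _ hA.le]
    have : (x ^ p) ^ A * (y ^ q) ^ A * (x ^ p) ^ B * (y ^ q) ^ C
        = ((x ^ p) ^ A * (x ^ p) ^ B) * ((y ^ q) ^ A * (y ^ q) ^ C) := by ring
    rw [this, ← ENNReal.rpow_add_of_nonneg _ _ hA.le hB.le,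
      ← ENNReal.rpow_add_of_nonneg _ _ hA.le hC.le]
    have eAB : A + B = 1 / p := by simp only [hA_def, hB_def]; ring
    have eAC : A + C = 1 / q := by simp only [hA_def, hC_def]; ring
    rw [eAB, eAC, ← ENNReal.rpow_mul, ← ENNReal.rpow_mul,
      mul_one_div_cancel hp0.ne', mul_one_div_cancel hq0.ne',
      ENNReal.rpow_one, ENNReal.rpow_one]
  -- per-m bound
  have key : ∀ m : ℤ, (∑' j, u j * v (m - j)) ≤
      (∑' j, u j ^ p * v (m - j) ^ q) ^ A * Up ^ B * Vq ^ C := by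
    intro m
    calc ∑' j, u j * v (m - j)
        = ∑' j, (u j ^ p * v (m - j) ^ q) ^ A * (u j ^ p) ^ B * (v (m - j) ^ q) ^ C :=
          tsum_congr fun j => hsplit (u j) (v (m - j))
      _ ≤ (∑' j, ((u j ^ p * v (m - j) ^ q) ^ A) ^ (1 / A)) ^ A *
          (∑' j, ((u j ^ p) ^ B) ^ (1 / B)) ^ B *
          (∑' j, ((v (m - j) ^ q) ^ C) ^ (1 / C)) ^ C :=
          holder3 hA hB hC hABC _ _ _
      _ = (∑' j, u j ^ p * v (m - j) ^ q) ^ A * Up ^ B * Vq ^ C := by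
          have e1 : ∀ (x : ℝ≥0∞), (x ^ A) ^ (1 / A) = x := fun x => by
            rw [← ENNReal.rpow_mul, mul_one_div_cancel hA.ne', ENNReal.rpow_one]
          have e2 : ∀ (x : ℝ≥0∞), (x ^ B) ^ (1 / B) = x := fun x => by
            rw [← ENNReal.rpow_mul, mul_one_div_cancel hB.ne', ENNReal.rpow_one]
          have e3 : ∀ (x : ℝ≥0∞), (x ^ C) ^ (1 / C) = x := fun x => by
            rw [← ENNReal.rpow_mul, mul_one_div_cancel hC.ne', ENNReal.rpow_one]
          have e4 : ∑' j, v (m - j) ^ q = Vq := by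
            simpa using ((Equiv.subLeft m).tsum_eq (fun x => v x ^ q))
          simp only [e1, e2, e3, e4]
          rfl
  -- raise to t, sum over m
  have key2 : ∀ m : ℤ, (∑' j, u j * v (m - j)) ^ t ≤
      (∑' j, u j ^ p * v (m - j) ^ q) * Up ^ (B * t) * Vq ^ (C * t) := by
    intro m
    have h := ENNReal.rpow_le_rpow (key m) ht0.le
    rwa [ENNReal.mul_rpow_of_nonneg _ _ ht0.le, ENNReal.mul_rpow_of_nonneg _ _ ht0.le,
      ← ENNReal.rpow_mul, ← ENNReal.rpow_mul, ← ENNReal.rpow_mul,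
      hA_def, one_div_mul_cancel ht0.ne', ENNReal.rpow_one] at h
  have fub : ∑' m : ℤ, ∑' j : ℤ, u j ^ p * v (m - j) ^ q = Up * Vq := by
    rw [ENNReal.tsum_comm]
    calc ∑' j : ℤ, ∑' m : ℤ, u j ^ p * v (m - j) ^ q
        = ∑' j : ℤ, u j ^ p * ∑' m : ℤ, v (m - j) ^ q := by
          simp [ENNReal.tsum_mul_left]
      _ = ∑' j : ℤ, u j ^ p * Vq := by
          congr 1; funext j
          congr 1
          simpa using ((Equiv.addRight j).tsum_eq (fun x => v (x - j) ^ q)).symm.trans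
            (by simp [hVq_def])
      _ = Up * Vq := ENNReal.tsum_mul_right
  have main : ∑' m : ℤ, (∑' j, u j * v (m - j)) ^ t ≤ Up ^ (1 + B * t) * Vq ^ (1 + C * t) := by
    calc ∑' m : ℤ, (∑' j, u j * v (m - j)) ^ t
        ≤ ∑' m : ℤ, (∑' j, u j ^ p * v (m - j) ^ q) * Up ^ (B * t) * Vq ^ (C * t) :=
          ENNReal.tsum_le_tsum key2
      _ = (∑' m : ℤ, ∑' j, u j ^ p * v (m - j) ^ q) * Up ^ (B * t) * Vq ^ (C * t) := by
          rw [ENNReal.tsum_mul_right, ENNReal.tsum_mul_right]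
      _ = (Up * Vq) * Up ^ (B * t) * Vq ^ (C * t) := by rw [fub]
      _ = (Up ^ (1:ℝ) * Up ^ (B * t)) * (Vq ^ (1:ℝ) * Vq ^ (C * t)) := by
          rw [ENNReal.rpow_one, ENNReal.rpow_one]; ring
      _ = Up ^ (1 + B * t) * Vq ^ (1 + C * t) := by
          rw [← ENNReal.rpow_add_of_nonneg _ _ zero_le_one (by positivity),
            ← ENNReal.rpow_add_of_nonneg _ _ zero_le_one (by positivity)]
  have final := ENNReal.rpow_le_rpow main (by positivity : (0:ℝ) ≤ 1 / t)
  rwa [ENNReal.mul_rpow_of_nonneg _ _ (by positivity : (0:ℝ) ≤ 1 / t),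
    ← ENNReal.rpow_mul, ← ENNReal.rpow_mul,
    show (1 + B * t) * (1 / t) = 1 / p by
      rw [hB_def]; field_simp; ring,
    show (1 + C * t) * (1 / t) = 1 / q by
      rw [hC_def]; field_simp; ring] at final

lemma lp_mul {p q : ℝ} (hp1 : 1 ≤ p) (hp2 : p < 2) (hq0 : 0 < q) (hq : 1 / q = 1 / p - 1 / 2)
    (c w : ℤ → ℝ≥0∞) :
    (∑' j, (c j * w j) ^ p) ≤ (∑' j, c j ^ (2:ℝ)) ^ (p / 2) * (∑' j, w j ^ q) ^ (p / q) := by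
  have hp0 : 0 < p := by linarith
  have hconj : (2 / p).HolderConjugate (q / p) := by
    rw [Real.holderConjugate_iff]; constructor
    · rw [lt_div_iff₀ hp0, one_mul]; exact hp2
    · rw [inv_div, inv_div]
      have h1 : p / q = p * (1 / q) := by ring
      rw [h1, hq]
      field_simp
      ring
  calc ∑' j, (c j * w j) ^ p
      = ∑' j, (c j ^ p) * (w j ^ p) := by
        simp [ENNReal.mul_rpow_of_nonneg _ _ hp0.le]
    _ ≤ (∑' j, (c j ^ p) ^ (2 / p)) ^ (1 / (2 / p)) * (∑' j, (w j ^ p) ^ (q / p)) ^ (1 / (q / p)) :=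
        holder2 hconj _ _
    _ = (∑' j, c j ^ (2:ℝ)) ^ (p / 2) * (∑' j, w j ^ q) ^ (p / q) := by
        have e1 : ∀ j : ℤ, ((c j ^ p) ^ (2 / p)) = c j ^ (2:ℝ) := fun j => by
          rw [← ENNReal.rpow_mul, mul_div_cancel₀ _ hp0.ne']
        have e2 : ∀ j : ℤ, ((w j ^ p) ^ (q / p)) = w j ^ q := fun j => by
          rw [← ENNReal.rpow_mul, mul_div_cancel₀ _ hp0.ne']
        rw [tsum_congr e1, tsum_congr e2, one_div_div, one_div_div]

lemma sum_rpow_int_ne_top {ρ : ℝ} (hρ : ρ < -1) :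
    ∑' j : ℤ, ENNReal.ofReal (|(j : ℝ)| ^ ρ) ≠ ⊤ := by
  have hs : Summable (fun j : ℤ => |(j : ℝ)| ^ ρ) := by
    have := Real.summable_abs_int_rpow (b := -ρ) (by linarith)
    simpa using this
  rw [← ENNReal.ofReal_tsum_of_nonneg (fun j => Real.rpow_nonneg (abs_nonneg _) _) hs]
  exact ENNReal.ofReal_ne_top

lemma sum_weight_ne_top {σ : ℝ} (hσ : σ < -1) :
    ∑' n : ℤ, ENNReal.ofReal ((1 + 2 * |(n : ℝ)|) ^ σ) ≠ ⊤ := by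
  have hle : ∀ n : ℤ, ENNReal.ofReal ((1 + 2 * |(n : ℝ)|) ^ σ) ≤
      ENNReal.ofReal (|(n : ℝ)| ^ σ) + (if n = 0 then 1 else 0) := by
    intro n
    by_cases hn : n = 0
    · subst hn
      simp only [Int.cast_zero, abs_zero, mul_zero, add_zero, if_true]
      rw [Real.one_rpow, Real.zero_rpow (by linarith : σ ≠ 0)]
      simp
    · have h1 : (1:ℝ) ≤ |(n : ℝ)| := by
        have := Int.one_le_abs hn
        calc (1:ℝ) ≤ |n| := by exact_mod_cast this
          _ = |(n:ℝ)| := by push_cast; ring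
      have : (1 + 2 * |(n : ℝ)|) ^ σ ≤ |(n : ℝ)| ^ σ :=
        Real.rpow_le_rpow_of_nonpos (by linarith) (by linarith) (by linarith)
      exact le_add_of_le_of_nonneg (ENNReal.ofReal_le_ofReal this) zero_le
  refine ne_top_of_le_ne_top ?_ (ENNReal.tsum_le_tsum hle)
  rw [ENNReal.tsum_add]
  refine ENNReal.add_ne_top.mpr ⟨sum_rpow_int_ne_top hσ, ?_⟩
  rw [tsum_ite_eq]
  exact ENNReal.one_ne_top

lemma tsum_double_le (f : ℤ → ℝ≥0∞) : ∑' n : ℤ, f (2 * n) ≤ ∑' m, f m :=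
  ENNReal.tsum_comp_le_tsum_of_injective (fun x y h => by omega) f

lemma weight_le {e : ℝ} (he0 : 0 ≤ e) (he1 : e ≤ 1) {j : ℤ} (hj : j ≠ 0) :
    (1 + 2 * |(j : ℝ)|) ^ e ≤ 3 * |(j : ℝ)| ^ e := by
  have h1 : (1:ℝ) ≤ |(j : ℝ)| := by
    have := Int.one_le_abs hj
    calc (1:ℝ) ≤ |j| := by exact_mod_cast this
      _ = |(j:ℝ)| := by push_cast; ring
  calc (1 + 2 * |(j : ℝ)|) ^ e ≤ (3 * |(j : ℝ)|) ^ e :=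
      Real.rpow_le_rpow (by positivity) (by linarith) he0
    _ = 3 ^ e * |(j : ℝ)| ^ e := Real.mul_rpow (by norm_num) (abs_nonneg _)
    _ ≤ 3 * |(j : ℝ)| ^ e := by
      have h3 : (3:ℝ) ^ e ≤ 3 ^ (1:ℝ) :=
        Real.rpow_le_rpow_of_exponent_le (by norm_num) he1
      rw [Real.rpow_one] at h3
      exact mul_le_mul_of_nonneg_right h3 (Real.rpow_nonneg (abs_nonneg _) _)




def cf (α : ℝ) (a : ℤ → ℂ) (k : ℤ) : ℝ :=
  (1 + 2 * |(k : ℝ)|) ^ (-α) * ‖a k‖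

def Wf (α : ℝ) (j : ℤ) : ℝ :=
  if j = 0 then 0 else (1 + 2 * |(j : ℝ)|) ^ α / |(j : ℝ)|

def Tm (a : ℤ → ℂ) (n k : ℤ) : ℂ :=
  if k = n ∨ k = -n then 0 else a (n - k) * a (n + k) / ((n : ℂ) ^ 2 - (k : ℂ) ^ 2)

def Gf (α : ℝ) (a : ℤ → ℂ) (n k : ℤ) : ℝ :=
  cf α a (n - k) * cf α a (n + k) * Wf α (n - k) * Wf α (n + k)

def RG (α : ℝ) (a : ℤ → ℂ) (n k : ℤ) : ℝ :=
  if |n + k| ≤ |n - k| then Gf α a n k else 0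

variable {α : ℝ} {a : ℤ → ℂ}

lemma base_pos (k : ℤ) : (0:ℝ) < 1 + 2 * |(k : ℝ)| := by positivity

lemma cf_nonneg (α : ℝ) (a : ℤ → ℂ) (k : ℤ) : 0 ≤ cf α a k := by
  unfold cf; positivity

lemma Wf_nonneg (α : ℝ) (j : ℤ) : 0 ≤ Wf α j := by
  unfold Wf
  split
  · exact le_refl 0
  · positivity

lemma Gf_nonneg (α : ℝ) (a : ℤ → ℂ) (n k : ℤ) : 0 ≤ Gf α a n k := by
  unfold Gf
  have := cf_nonneg α a (n - k); have := cf_nonneg α a (n + k)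
  have := Wf_nonneg α (n - k); have := Wf_nonneg α (n + k)
  positivity

lemma RG_nonneg (α : ℝ) (a : ℤ → ℂ) (n k : ℤ) : 0 ≤ RG α a n k := by
  unfold RG
  split
  · exact Gf_nonneg α a n k
  · exact le_refl 0

lemma abs_cast_one_le {j : ℤ} (hj : j ≠ 0) : (1:ℝ) ≤ |(j : ℝ)| := by
  have := Int.one_le_abs hj
  calc (1:ℝ) ≤ |j| := by exact_mod_cast this
    _ = |(j:ℝ)| := by push_cast; ring

lemma weight_le' {e : ℝ} (he0 : 0 ≤ e) (he1 : e ≤ 1) {j : ℤ} (hj : j ≠ 0) :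
    (1 + 2 * |(j : ℝ)|) ^ e ≤ 3 * |(j : ℝ)| ^ e := by
  have h1 := abs_cast_one_le hj
  calc (1 + 2 * |(j : ℝ)|) ^ e ≤ (3 * |(j : ℝ)|) ^ e :=
      Real.rpow_le_rpow (by positivity) (by linarith) he0
    _ = 3 ^ e * |(j : ℝ)| ^ e := Real.mul_rpow (by norm_num) (abs_nonneg _)
    _ ≤ 3 * |(j : ℝ)| ^ e := by
      have h3 : (3:ℝ) ^ e ≤ 3 ^ (1:ℝ) :=
        Real.rpow_le_rpow_of_exponent_le (by norm_num) he1
      rw [Real.rpow_one] at h3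
      exact mul_le_mul_of_nonneg_right h3 (Real.rpow_nonneg (abs_nonneg _) _)

lemma Wf_le (hα0 : 0 ≤ α) (hα1 : α ≤ 1) (j : ℤ) :
    Wf α j ≤ 3 * |(j : ℝ)| ^ (α - 1) := by
  unfold Wf
  split
  · positivity
  · next hj =>
    have h1 := abs_cast_one_le hj
    have h0 : (0:ℝ) < |(j:ℝ)| := by linarith
    rw [show (3:ℝ) * |(j:ℝ)| ^ (α - 1) = 3 * |(j:ℝ)| ^ α / |(j:ℝ)| by
      rw [Real.rpow_sub h0, Real.rpow_one]; ring]
    gcongr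
    exact weight_le' hα0 hα1 hj

lemma norm_eq (α : ℝ) (a : ℤ → ℂ) (j : ℤ) :
    ‖a j‖ = (1 + 2 * |(j : ℝ)|) ^ α * cf α a j := by
  unfold cf
  rw [← mul_assoc, ← Real.rpow_add (base_pos j), add_neg_cancel, Real.rpow_zero, one_mul]

lemma Tm_norm_le (α : ℝ) (a : ℤ → ℂ) (n k : ℤ) : ‖Tm a n k‖ ≤ Gf α a n k := by
  unfold Tm
  split
  · rw [norm_zero]; exact Gf_nonneg α a n k
  · next h =>
    push_neg at h
    obtain ⟨h1, h2⟩ := h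
    have hj : n - k ≠ 0 := by omega
    have hl : n + k ≠ 0 := by omega
    have hdj : (0:ℝ) < |((n - k : ℤ) : ℝ)| := by
      have := abs_cast_one_le hj; linarith
    have hdl : (0:ℝ) < |((n + k : ℤ) : ℝ)| := by
      have := abs_cast_one_le hl; linarith
    have hden : ((n : ℂ) ^ 2 - (k : ℂ) ^ 2) = (((n - k) * (n + k) : ℤ) : ℂ) := by
      push_cast; ring
    rw [norm_div, norm_mul, hden]
    have hd : ‖(((n - k) * (n + k) : ℤ) : ℂ)‖ = |((n-k : ℤ):ℝ)| * |((n+k:ℤ):ℝ)| := by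
      have e : ∀ m : ℤ, ‖((m : ℤ) : ℂ)‖ = |(m : ℝ)| := fun m => by simp
      rw [Int.cast_mul, norm_mul, e, e]
    rw [hd, norm_eq α a (n - k), norm_eq α a (n + k)]
    unfold Gf Wf
    rw [if_neg hj, if_neg hl]
    apply le_of_eq
    field_simp

lemma Wf_le3 (hα0 : 0 ≤ α) (hα1 : α ≤ 1) (j : ℤ) : Wf α j ≤ 3 := by
  unfold Wf
  split
  · norm_num
  · next hj =>
    calc (1 + 2 * |(j:ℝ)|) ^ α / |(j:ℝ)| ≤ 3 * |(j:ℝ)| ^ (α - 1) := by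
          have h := Wf_le hα0 hα1 j
          unfold Wf at h
          rwa [if_neg hj] at h
      _ ≤ 3 * 1 := by
          have : |(j:ℝ)| ^ (α - 1) ≤ 1 :=
            Real.rpow_le_one_of_one_le_of_nonpos (abs_cast_one_le hj) (by linarith)
          linarith
      _ = 3 := by norm_num

lemma cf_sq (α : ℝ) (a : ℤ → ℂ) (k : ℤ) :
    cf α a k ^ 2 = (1 + 2 * |(k : ℝ)|) ^ (-(2 * α)) * ‖a k‖ ^ 2 := by
  unfold cf
  have e : (-α * ((2:ℕ):ℝ)) = -(2 * α) := by push_cast; ring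
  rw [mul_pow, ← Real.rpow_natCast ((1 + 2*|(k:ℝ)|) ^ (-α)) 2, ← Real.rpow_mul (base_pos k).le, e]

lemma csq_summable (hS : Summable (fun k : ℤ => (1 + 2 * |(k : ℝ)|) ^ (-(2 * α)) * ‖a k‖ ^ 2)) :
    Summable (fun k => cf α a k ^ 2) :=
  hS.congr (fun k => (cf_sq α a k).symm)

lemma Gf_le (hα0 : 0 ≤ α) (hα1 : α ≤ 1) (n k : ℤ) :
    Gf α a n k ≤ (9/2) * (cf α a (n-k) ^ 2 + cf α a (n+k) ^ 2) := by
  have c1 := cf_nonneg α a (n - k); have c2 := cf_nonneg α a (n + k)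
  have w1 := Wf_nonneg α (n - k); have w2 := Wf_nonneg α (n + k)
  have w3 := Wf_le3 hα0 hα1 (n - k); have w4 := Wf_le3 hα0 hα1 (n + k)
  have hW : Wf α (n-k) * Wf α (n+k) ≤ 9 := by nlinarith
  have h9 : Gf α a n k ≤ 9 * (cf α a (n-k) * cf α a (n+k)) := by
    unfold Gf
    calc cf α a (n-k) * cf α a (n+k) * Wf α (n-k) * Wf α (n+k)
        = (cf α a (n-k) * cf α a (n+k)) * (Wf α (n-k) * Wf α (n+k)) := by ring
      _ ≤ (cf α a (n-k) * cf α a (n+k)) * 9 :=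
          mul_le_mul_of_nonneg_left hW (by positivity)
      _ = 9 * (cf α a (n-k) * cf α a (n+k)) := by ring
  have hsq : cf α a (n-k) * cf α a (n+k) ≤ (cf α a (n-k) ^ 2 + cf α a (n+k) ^ 2) / 2 := by
    nlinarith [sq_nonneg (cf α a (n-k) - cf α a (n+k))]
  linarith

lemma Tm_summable (hα0 : 0 ≤ α) (hα1 : α ≤ 1)
    (hS : Summable (fun k : ℤ => (1 + 2 * |(k : ℝ)|) ^ (-(2 * α)) * ‖a k‖ ^ 2)) (n : ℤ) :
    Summable (fun k : ℤ => ‖Tm a n k‖) := by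
  have hc := csq_summable (α := α) (a := a) hS
  have inj1 : Function.Injective (fun k : ℤ => n - k) := fun x y h => by
    simp only at h; omega
  have inj2 : Function.Injective (fun k : ℤ => n + k) := fun x y h => by
    simp only at h; omega
  have h1 : Summable (fun k : ℤ => cf α a (n - k) ^ 2) := hc.comp_injective inj1
  have h2 : Summable (fun k : ℤ => cf α a (n + k) ^ 2) := hc.comp_injective inj2
  have hmaj : Summable (fun k : ℤ => (9/2) * (cf α a (n-k) ^ 2 + cf α a (n+k) ^ 2)) :=
    (h1.add h2).mul_left _
  exact Summable.of_nonneg_of_le (fun k => norm_nonneg _)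
    (fun k => le_trans (Tm_norm_le α a n k) (Gf_le hα0 hα1 n k)) hmaj

lemma region_split (α : ℝ) (a : ℤ → ℂ) (n : ℤ) :
    ∑' k : ℤ, ENNReal.ofReal (Gf α a n k) ≤ 2 * ∑' k : ℤ, ENNReal.ofReal (RG α a n k) := by
  have hpt : ∀ k : ℤ, ENNReal.ofReal (Gf α a n k) = ENNReal.ofReal (RG α a n k) +
      ENNReal.ofReal (if |n + k| ≤ |n - k| then 0 else Gf α a n k) := by
    intro k
    unfold RG
    by_cases hc : |n + k| ≤ |n - k|
    · rw [if_pos hc, if_pos hc]; simp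
    · rw [if_neg hc, if_neg hc]; simp
  have h2 : ∑' k : ℤ, ENNReal.ofReal (if |n + k| ≤ |n - k| then 0 else Gf α a n k) ≤
      ∑' k : ℤ, ENNReal.ofReal (RG α a n k) := by
    rw [← (Equiv.neg ℤ).tsum_eq
      (fun k => ENNReal.ofReal (if |n + k| ≤ |n - k| then 0 else Gf α a n k))]
    apply ENNReal.tsum_le_tsum
    intro k
    simp only [Equiv.neg_apply]
    have e1 : n + -k = n - k := by ring
    have e2 : n - -k = n + k := by ring
    rw [e1]  -- condition becomes |n - k| ≤ |n - -k| ... careful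
    by_cases hc : |n - k| ≤ |n + k|
    · rw [e2, if_pos hc]; simp
    · rw [e2, if_neg hc]
      have hswap : |n + k| ≤ |n - k| := (not_le.mp hc).le
      unfold RG
      rw [if_pos hswap]
      apply ENNReal.ofReal_le_ofReal
      apply le_of_eq
      unfold Gf
      rw [e1, e2]
      ring
  calc ∑' k : ℤ, ENNReal.ofReal (Gf α a n k)
      = (∑' k : ℤ, ENNReal.ofReal (RG α a n k)) +
        ∑' k : ℤ, ENNReal.ofReal (if |n + k| ≤ |n - k| then 0 else Gf α a n k) := by
        rw [tsum_congr hpt, ENNReal.tsum_add]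
    _ ≤ (∑' k : ℤ, ENNReal.ofReal (RG α a n k)) + ∑' k : ℤ, ENNReal.ofReal (RG α a n k) :=
        add_le_add_right h2 _
    _ = 2 * ∑' k : ℤ, ENNReal.ofReal (RG α a n k) := (two_mul _).symm

lemma omega_bound (hα0 : 0 ≤ α) (hα1 : α ≤ 1)
    (hS : Summable (fun k : ℤ => (1 + 2 * |(k : ℝ)|) ^ (-(2 * α)) * ‖a k‖ ^ 2)) (n : ℤ) :
    ENNReal.ofReal ‖(1 / (π:ℂ) ^ 2) * ∑' k : ℤ, Tm a n k‖ ≤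
      ENNReal.ofReal (((π:ℝ) ^ 2)⁻¹) * (2 * ∑' k : ℤ, ENNReal.ofReal (RG α a n k)) := by
  have hsum := Tm_summable hα0 hα1 hS n
  have hnorm : ‖(1 / (π:ℂ) ^ 2)‖ = ((π:ℝ) ^ 2)⁻¹ := by
    rw [norm_div, norm_one, norm_pow]
    simp [Real.pi_pos.le, abs_of_pos Real.pi_pos]
  have h1 : ‖(1 / (π:ℂ) ^ 2) * ∑' k : ℤ, Tm a n k‖ ≤ ((π:ℝ)^2)⁻¹ * ∑' k : ℤ, ‖Tm a n k‖ := by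
    rw [norm_mul, hnorm]
    exact mul_le_mul_of_nonneg_left (norm_tsum_le_tsum_norm hsum) (by positivity)
  calc ENNReal.ofReal ‖(1 / (π:ℂ) ^ 2) * ∑' k : ℤ, Tm a n k‖
      ≤ ENNReal.ofReal (((π:ℝ)^2)⁻¹ * ∑' k : ℤ, ‖Tm a n k‖) := ENNReal.ofReal_le_ofReal h1
    _ = ENNReal.ofReal (((π:ℝ)^2)⁻¹) * ENNReal.ofReal (∑' k : ℤ, ‖Tm a n k‖) :=
        ENNReal.ofReal_mul (by positivity)
    _ ≤ ENNReal.ofReal (((π:ℝ)^2)⁻¹) * (2 * ∑' k : ℤ, ENNReal.ofReal (RG α a n k)) := by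
        apply mul_le_mul_right
        calc ENNReal.ofReal (∑' k : ℤ, ‖Tm a n k‖)
            = ∑' k : ℤ, ENNReal.ofReal ‖Tm a n k‖ :=
              ENNReal.ofReal_tsum_of_nonneg (fun k => norm_nonneg _) hsum
          _ ≤ ∑' k : ℤ, ENNReal.ofReal (Gf α a n k) :=
              ENNReal.tsum_le_tsum (fun k => ENNReal.ofReal_le_ofReal (Tm_norm_le α a n k))
          _ ≤ 2 * ∑' k : ℤ, ENNReal.ofReal (RG α a n k) := region_split α a n


lemma abs_sum_le (n k : ℤ) (hc : |n + k| ≤ |n - k|) : |(n:ℝ)| ≤ |((n - k : ℤ):ℝ)| := by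
  have h1 : |2 * n| = |(n - k) + (n + k)| := by ring_nf
  have h2 : |(n - k) + (n + k)| ≤ |n - k| + |n + k| := abs_add_le _ _
  have h3 : |2 * n| = 2 * |n| := by rw [abs_mul]; norm_num
  have : |n| ≤ |n - k| := by omega
  calc |(n:ℝ)| = ((|n| : ℤ) : ℝ) := by push_cast; ring
    _ ≤ ((|n - k| : ℤ) : ℝ) := by exact_mod_cast this
    _ = |((n - k : ℤ):ℝ)| := by push_cast; ring

lemma hHP_A (hα0 : 1/2 ≤ α) (hα1 : α < 1) {s' : ℝ} (hs0 : 0 ≤ s') (hs1 : s' + α ≤ 1)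
    (n k : ℤ) :
    (1 + 2 * |(n:ℝ)|) ^ s' * RG α a n k ≤
      (3 * (cf α a (n - k) * |((n - k : ℤ):ℝ)| ^ (α - 1 + s'))) *
      (3 * (cf α a (n + k) * |((n + k : ℤ):ℝ)| ^ (α - 1))) := by
  have hrhs : 0 ≤ (3 * (cf α a (n - k) * |((n - k : ℤ):ℝ)| ^ (α - 1 + s'))) *
      (3 * (cf α a (n + k) * |((n + k : ℤ):ℝ)| ^ (α - 1))) := by
    have := cf_nonneg α a (n - k); have := cf_nonneg α a (n + k)
    positivity
  unfold RG
  split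
  · next hc =>
    by_cases hj : n - k = 0
    · have hW : Wf α (n - k) = 0 := by unfold Wf; rw [if_pos hj]
      unfold Gf
      rw [hW]
      simp only [mul_zero, zero_mul]
      exact hrhs
    · by_cases hl : n + k = 0
      · have hW : Wf α (n + k) = 0 := by unfold Wf; rw [if_pos hl]
        unfold Gf
        rw [hW]
        simp only [mul_zero, zero_mul]
        exact hrhs
      · -- main case
        have hj1 := abs_cast_one_le hj
        have hl1 := abs_cast_one_le hl
        have hjpos : (0:ℝ) < |((n - k : ℤ):ℝ)| := by linarith
        have key1 : (1 + 2 * |(n:ℝ)|) ^ s' * Wf α (n - k) ≤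
            3 * |((n - k : ℤ):ℝ)| ^ (α - 1 + s') := by
          have step1 : (1 + 2 * |(n:ℝ)|) ^ s' ≤ (1 + 2 * |((n - k : ℤ):ℝ)|) ^ s' := by
            apply Real.rpow_le_rpow (by positivity) ?_ hs0
            have := abs_sum_le n k hc
            linarith
          have step2 : (1 + 2 * |((n - k : ℤ):ℝ)|) ^ s' * Wf α (n - k) =
              (1 + 2 * |((n - k : ℤ):ℝ)|) ^ (s' + α) / |((n - k : ℤ):ℝ)| := by
            unfold Wf
            rw [if_neg hj, Real.rpow_add (base_pos (n - k)) s' α]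
            ring
          have step3 : (1 + 2 * |((n - k : ℤ):ℝ)|) ^ (s' + α) / |((n - k : ℤ):ℝ)| ≤
              3 * |((n - k : ℤ):ℝ)| ^ (α - 1 + s') := by
            have hup := weight_le' (e := s' + α) (by linarith) hs1 hj
            rw [show (3:ℝ) * |((n - k : ℤ):ℝ)| ^ (α - 1 + s') =
              3 * |((n - k : ℤ):ℝ)| ^ (s' + α) / |((n - k : ℤ):ℝ)| by
                rw [show α - 1 + s' = (s' + α) - 1 by ring, Real.rpow_sub hjpos,
                  Real.rpow_one]
                ring]
            gcongr
          calc (1 + 2 * |(n:ℝ)|) ^ s' * Wf α (n - k)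
              ≤ (1 + 2 * |((n - k : ℤ):ℝ)|) ^ s' * Wf α (n - k) :=
                mul_le_mul_of_nonneg_right step1 (Wf_nonneg α (n - k))
            _ = (1 + 2 * |((n - k : ℤ):ℝ)|) ^ (s' + α) / |((n - k : ℤ):ℝ)| := step2
            _ ≤ 3 * |((n - k : ℤ):ℝ)| ^ (α - 1 + s') := step3
        have key2 : Wf α (n + k) ≤ 3 * |((n + k : ℤ):ℝ)| ^ (α - 1) :=
          Wf_le (by linarith) hα1.le (n + k)
        have hprod : ((1 + 2 * |(n:ℝ)|) ^ s' * Wf α (n - k)) * Wf α (n + k) ≤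
            (3 * |((n - k : ℤ):ℝ)| ^ (α - 1 + s')) * (3 * |((n + k : ℤ):ℝ)| ^ (α - 1)) := by
          apply mul_le_mul key1 key2 (Wf_nonneg α (n + k)) (by positivity)
        have c1 := cf_nonneg α a (n - k); have c2 := cf_nonneg α a (n + k)
        unfold Gf
        calc (1 + 2 * |(n:ℝ)|) ^ s' *
              (cf α a (n - k) * cf α a (n + k) * Wf α (n - k) * Wf α (n + k))
            = (cf α a (n - k) * cf α a (n + k)) *
              (((1 + 2 * |(n:ℝ)|) ^ s' * Wf α (n - k)) * Wf α (n + k)) := by ring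
          _ ≤ (cf α a (n - k) * cf α a (n + k)) *
              ((3 * |((n - k : ℤ):ℝ)| ^ (α - 1 + s')) * (3 * |((n + k : ℤ):ℝ)| ^ (α - 1))) :=
              mul_le_mul_of_nonneg_left hprod (by positivity)
          _ = _ := by ring
  · next hc =>
    rw [mul_zero]
    exact hrhs

lemma hHP_B (hα0 : 0 ≤ α) (hα1 : α ≤ 1) (n k : ℤ) :
    RG α a n k ≤
      (3 * (cf α a (n - k) * |((n - k : ℤ):ℝ)| ^ (α - 1))) *
      (3 * (cf α a (n + k) * |((n + k : ℤ):ℝ)| ^ (α - 1))) := by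
  have c1 := cf_nonneg α a (n - k); have c2 := cf_nonneg α a (n + k)
  have hrhs : 0 ≤ (3 * (cf α a (n - k) * |((n - k : ℤ):ℝ)| ^ (α - 1))) *
      (3 * (cf α a (n + k) * |((n + k : ℤ):ℝ)| ^ (α - 1))) := by positivity
  unfold RG
  split
  · have key1 := Wf_le hα0 hα1 (n - k)
    have key2 := Wf_le hα0 hα1 (n + k)
    have hprod : Wf α (n - k) * Wf α (n + k) ≤
        (3 * |((n - k : ℤ):ℝ)| ^ (α - 1)) * (3 * |((n + k : ℤ):ℝ)| ^ (α - 1)) :=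
      mul_le_mul key1 key2 (Wf_nonneg α (n + k)) (by positivity)
    unfold Gf
    calc cf α a (n - k) * cf α a (n + k) * Wf α (n - k) * Wf α (n + k)
        = (cf α a (n - k) * cf α a (n + k)) * (Wf α (n - k) * Wf α (n + k)) := by ring
      _ ≤ (cf α a (n - k) * cf α a (n + k)) *
          ((3 * |((n - k : ℤ):ℝ)| ^ (α - 1)) * (3 * |((n + k : ℤ):ℝ)| ^ (α - 1))) :=
          mul_le_mul_of_nonneg_left hprod (by positivity)
      _ = _ := by ring
  · exact hrhs





lemma finish_conv {C S : ℝ} (hS0 : 0 ≤ S) (φ : ℤ → ℝ) (hφ : ∀ n, 0 ≤ φ n) {K : ℝ≥0∞}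
    (hK : K ≠ ⊤)
    (hbound : ∑' n : ℤ, ENNReal.ofReal (φ n) ≤ K * (ENNReal.ofReal S) ^ (2:ℝ))
    (hC : (K.toReal) ^ ((1:ℝ)/2) ≤ C) :
    Summable φ ∧ (∑' n, φ n) ^ ((1:ℝ)/2) ≤ C * S := by
  have hKS : K * (ENNReal.ofReal S) ^ (2:ℝ) ≠ ⊤ :=
    ENNReal.mul_ne_top hK (ENNReal.rpow_ne_top_of_nonneg (by norm_num) ENNReal.ofReal_ne_top)
  have hRne : ∑' n : ℤ, ENNReal.ofReal (φ n) ≠ ⊤ := ne_top_of_le_ne_top hKS hbound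
  have hsum : Summable φ :=
    (ENNReal.summable_toReal hRne).congr (fun n => ENNReal.toReal_ofReal (hφ n))
  refine ⟨hsum, ?_⟩
  have htsum : ∑' n, φ n = (∑' n : ℤ, ENNReal.ofReal (φ n)).toReal := by
    rw [ENNReal.tsum_toReal_eq (fun n => ENNReal.ofReal_ne_top)]
    exact tsum_congr (fun n => (ENNReal.toReal_ofReal (hφ n)).symm)
  have hle : (∑' n : ℤ, ENNReal.ofReal (φ n)).toReal ≤ K.toReal * S ^ (2:ℝ) := by
    have h := ENNReal.toReal_mono hKS hbound
    rwa [ENNReal.toReal_mul, ENNReal.ofReal_rpow_of_nonneg hS0 (by norm_num),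
      ENNReal.toReal_ofReal (Real.rpow_nonneg hS0 _)] at h
  calc (∑' n, φ n) ^ ((1:ℝ)/2)
      = ((∑' n : ℤ, ENNReal.ofReal (φ n)).toReal) ^ ((1:ℝ)/2) := by rw [htsum]
    _ ≤ (K.toReal * S ^ (2:ℝ)) ^ ((1:ℝ)/2) :=
        Real.rpow_le_rpow ENNReal.toReal_nonneg hle (by norm_num)
    _ = K.toReal ^ ((1:ℝ)/2) * S := by
        rw [Real.mul_rpow ENNReal.toReal_nonneg (Real.rpow_nonneg hS0 _),
          ← Real.rpow_mul hS0]
        norm_num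
    _ ≤ C * S := mul_le_mul_of_nonneg_right hC hS0

lemma conv_reindex (V1 V2 : ℤ → ℝ≥0∞) (n : ℤ) :
    ∑' k : ℤ, V1 (n - k) * V2 (n + k) = ∑' j : ℤ, V1 j * V2 (2 * n - j) := by
  rw [← (Equiv.subLeft n).tsum_eq (fun j => V1 j * V2 (2 * n - j))]
  apply tsum_congr
  intro k
  simp only [Equiv.subLeft_apply]
  congr 2
  ring


lemma core_bound {α : ℝ} {a : ℤ → ℂ} (hα0 : 0 ≤ α) (hα1 : α ≤ 1)
    (hS : Summable (fun k : ℤ => (1 + 2 * |(k : ℝ)|) ^ (-(2 * α)) * ‖a k‖ ^ 2))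
    (M : ℤ → ℝ≥0∞) (V1 V2 : ℤ → ℝ≥0∞)
    (hpt : ∀ n k : ℤ, M n * ENNReal.ofReal (RG α a n k) ≤ V1 (n - k) * V2 (n + k)) (n : ℤ) :
    M n * ENNReal.ofReal ‖(1 / (π:ℂ) ^ 2) * ∑' k : ℤ, Tm a n k‖ ≤
      ∑' j : ℤ, V1 j * V2 (2 * n - j) := by
  have hπ : (2 : ℝ≥0∞) * ENNReal.ofReal (((π:ℝ) ^ 2)⁻¹) ≤ 1 := by
    have h3 := Real.pi_gt_three
    have h9 : (9:ℝ) ≤ (π:ℝ)^2 := by nlinarith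
    have hinv : ((π:ℝ)^2)⁻¹ ≤ (9:ℝ)⁻¹ := by
      apply inv_anti₀ (by norm_num) h9
    have hππ : (2:ℝ) * ((π:ℝ)^2)⁻¹ ≤ 1 := by
      calc (2:ℝ) * ((π:ℝ)^2)⁻¹ ≤ 2 * (9:ℝ)⁻¹ := by linarith
        _ ≤ 1 := by norm_num
    calc (2 : ℝ≥0∞) * ENNReal.ofReal (((π:ℝ)^2)⁻¹)
        = ENNReal.ofReal 2 * ENNReal.ofReal (((π:ℝ)^2)⁻¹) := by norm_num
      _ = ENNReal.ofReal (2 * ((π:ℝ)^2)⁻¹) := (ENNReal.ofReal_mul (by norm_num)).symm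
      _ ≤ 1 := by rw [← ENNReal.ofReal_one]; exact ENNReal.ofReal_le_ofReal hππ
  calc M n * ENNReal.ofReal ‖(1 / (π:ℂ) ^ 2) * ∑' k : ℤ, Tm a n k‖
      ≤ M n * (ENNReal.ofReal (((π:ℝ)^2)⁻¹) * (2 * ∑' k : ℤ, ENNReal.ofReal (RG α a n k))) :=
        mul_le_mul_right (omega_bound hα0 hα1 hS n) _
    _ = (2 * ENNReal.ofReal (((π:ℝ)^2)⁻¹)) * ∑' k : ℤ, (M n * ENNReal.ofReal (RG α a n k)) := by
        rw [ENNReal.tsum_mul_left]; ring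
    _ ≤ (2 * ENNReal.ofReal (((π:ℝ)^2)⁻¹)) * ∑' k : ℤ, V1 (n - k) * V2 (n + k) :=
        mul_le_mul_right (ENNReal.tsum_le_tsum (fun k => hpt n k)) _
    _ ≤ 1 * ∑' k : ℤ, V1 (n - k) * V2 (n + k) := mul_le_mul_left hπ _
    _ = ∑' j : ℤ, V1 j * V2 (2 * n - j) := by rw [one_mul, conv_reindex]

lemma helper_sq {b : ℝ} (hb : 0 < b) (s' y : ℝ) (hy : 0 ≤ y) :
    ENNReal.ofReal (b ^ (2 * s') * y ^ 2) =
      (ENNReal.ofReal (b ^ s') * ENNReal.ofReal y) ^ (2:ℝ) := by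
  have h1 : b ^ (2 * s') = (b ^ s') ^ (2:ℕ) := by
    rw [← Real.rpow_natCast (b ^ s') 2, ← Real.rpow_mul hb.le]
    congr 1
    push_cast; ring
  rw [h1, ← mul_pow, ENNReal.ofReal_pow (by positivity),
    ENNReal.ofReal_mul (Real.rpow_nonneg hb.le _), ← ENNReal.rpow_natCast]
  norm_num

lemma combine_A {X1 X2 E K1 K2 : ℝ≥0∞} {p q q1 q2 : ℝ}
    (hp0 : 0 < p) (hq0 : 0 < q) (hq10 : 0 < q1) (hq20 : 0 < q2)
    (h1 : X1 ≤ E ^ (p/2) * K1 ^ (p/q1)) (h2 : X2 ≤ E ^ (q/2) * K2 ^ (q/q2)) :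
    (X1 ^ (1/p) * X2 ^ (1/q)) ^ (2:ℝ) ≤ (K1 ^ (2/q1) * K2 ^ (2/q2)) * (E * E) := by
  calc (X1 ^ (1/p) * X2 ^ (1/q)) ^ (2:ℝ)
      = X1 ^ (2/p) * X2 ^ (2/q) := by
        rw [ENNReal.mul_rpow_of_nonneg _ _ (by norm_num : (0:ℝ) ≤ 2),
          ← ENNReal.rpow_mul, ← ENNReal.rpow_mul]
        congr 1 <;> [skip; skip] <;> congr 1 <;> ring
    _ ≤ (E ^ (p/2) * K1 ^ (p/q1)) ^ (2/p) * (E ^ (q/2) * K2 ^ (q/q2)) ^ (2/q) :=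
        mul_le_mul' (ENNReal.rpow_le_rpow h1 (by positivity))
          (ENNReal.rpow_le_rpow h2 (by positivity))
    _ = (E ^ (1:ℝ) * K1 ^ (2/q1)) * (E ^ (1:ℝ) * K2 ^ (2/q2)) := by
        rw [ENNReal.mul_rpow_of_nonneg _ _ (by positivity : (0:ℝ) ≤ 2/p),
          ENNReal.mul_rpow_of_nonneg _ _ (by positivity : (0:ℝ) ≤ 2/q),
          ← ENNReal.rpow_mul, ← ENNReal.rpow_mul, ← ENNReal.rpow_mul, ← ENNReal.rpow_mul,
          show p/2 * (2/p) = 1 by field_simp,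
          show p/q1 * (2/p) = 2/q1 by field_simp,
          show q/2 * (2/q) = 1 by field_simp,
          show q/q2 * (2/q) = 2/q2 by field_simp]
    _ = (K1 ^ (2/q1) * K2 ^ (2/q2)) * (E * E) := by
        rw [ENNReal.rpow_one]; ring

end

end Stmt5Aux

set_option maxHeartbeats 1000000 in
open Stmt5Aux in
/-- Convolution Lemma, case `1/2 ≤ α < 1`: the quadratic convolution
`ω(n) = (1/π²) Σ_{k ≠ ±n} a(n-k) a(n+k)/(n²-k²)` of a sequence `a ∈ h^{-α}`
belongs to `h^{3/2-2α-δ}`, with `‖ω‖ ≤ C ‖a‖²_{h^{-α}}` for a constant `C = C(α,δ)`. -/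
theorem stmt_5 (α : ℝ) (hα0 : 1 / 2 ≤ α) (hα : α < 1) (δ : ℝ) (hδ : 0 < δ) :
    ∃ C : ℝ, ∀ a : ℤ → ℂ,
      Summable (fun k : ℤ => (1 + 2 * |(k : ℝ)|) ^ (-(2 * α)) * ‖a k‖ ^ 2) →
      (∀ n : ℤ, Summable fun k : ℤ =>
          ‖if k = n ∨ k = -n then (0 : ℂ)
            else a (n - k) * a (n + k) / ((n : ℂ) ^ 2 - (k : ℂ) ^ 2)‖) ∧
      Summable (fun n : ℤ => (1 + 2 * |(n : ℝ)|) ^ (2 * (3 / 2 - 2 * α - δ)) *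
          ‖(1 / (π : ℂ) ^ 2) * ∑' k : ℤ,
            (if k = n ∨ k = -n then (0 : ℂ)
              else a (n - k) * a (n + k) / ((n : ℂ) ^ 2 - (k : ℂ) ^ 2))‖ ^ 2) ∧
      (∑' n : ℤ, (1 + 2 * |(n : ℝ)|) ^ (2 * (3 / 2 - 2 * α - δ)) *
          ‖(1 / (π : ℂ) ^ 2) * ∑' k : ℤ,
            (if k = n ∨ k = -n then (0 : ℂ)
              else a (n - k) * a (n + k) / ((n : ℂ) ^ 2 - (k : ℂ) ^ 2))‖ ^ 2) ^ (1 / 2 : ℝ)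
        ≤ C * ∑' k : ℤ, (1 + 2 * |(k : ℝ)|) ^ (-(2 * α)) * ‖a k‖ ^ 2 := by
  by_cases hs : 0 ≤ 3 / 2 - 2 * α - δ
  · -- Branch A : the weight exponent s' is nonnegative
    set s' := 3 / 2 - 2 * α - δ with hs'def
    set θ := (α - 1/2 + min (α - 1/2 + δ) (1/2)) / 2 with hθdef
    have hmin1 : α - 1/2 < min (α - 1/2 + δ) (1/2) := lt_min (by linarith) (by linarith)
    have hmin2 : min (α - 1/2 + δ) (1/2) ≤ α - 1/2 + δ := min_le_left _ _
    have hmin3 : min (α - 1/2 + δ) (1/2) ≤ 1/2 := min_le_right _ _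
    have hθ1 : α - 1/2 < θ := by rw [hθdef]; linarith
    have hθ2 : θ < α - 1/2 + δ := by rw [hθdef]; linarith
    have hθ3 : θ < 1/2 := by rw [hθdef]; linarith
    have hθ0 : 0 < θ := by linarith
    set η := 1/2 - θ with hηdef
    have hη0 : 0 < η := by rw [hηdef]; linarith
    have hη1 : η < 1 - α := by rw [hηdef]; linarith
    set p := 1/(1/2 + θ) with hpdef
    set q := 1/(1/2 + η) with hqdef
    have hpd0 : (0:ℝ) < 1/2 + θ := by linarith
    have hqd0 : (0:ℝ) < 1/2 + η := by linarith
    have hp_inv : 1/p = 1/2 + θ := by rw [hpdef, one_div_one_div]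
    have hq_inv : 1/q = 1/2 + η := by rw [hqdef, one_div_one_div]
    have hp0 : 0 < p := by rw [hpdef]; positivity
    have hq0 : 0 < q := by rw [hqdef]; positivity
    have hp1 : 1 ≤ p := by
      rw [hpdef, le_div_iff₀ hpd0, one_mul]; linarith
    have hq1 : 1 ≤ q := by
      rw [hqdef, le_div_iff₀ hqd0, one_mul]; linarith
    have hp2 : p < 2 := by
      rw [hpdef, div_lt_iff₀ hpd0]; linarith
    have hq2 : q < 2 := by
      rw [hqdef, div_lt_iff₀ hqd0]; linarith
    have hpq : 1/p + 1/q = 1 + 1/(2:ℝ) := by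
      rw [hp_inv, hq_inv, hηdef]; ring
    set q1 := 1/θ with hq1def
    set q2 := 1/η with hq2def
    have hq10 : 0 < q1 := by rw [hq1def]; positivity
    have hq20 : 0 < q2 := by rw [hq2def]; positivity
    have hq1inv : 1/q1 = 1/p - 1/2 := by rw [hq1def, one_div_one_div, hp_inv]; ring
    have hq2inv : 1/q2 = 1/q - 1/2 := by rw [hq2def, one_div_one_div, hq_inv]; ring
    have hβ1q1 : (α - 1 + s') * q1 < -1 := by
      rw [hq1def, mul_one_div, div_lt_iff₀ hθ0]
      have : α - 1 + s' < -θ := by rw [hs'def]; linarith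
      linarith
    have hβ2q2 : (α - 1) * q2 < -1 := by
      rw [hq2def, mul_one_div, div_lt_iff₀ hη0]
      have : α - 1 < -η := by linarith
      linarith
    set K1 := ∑' j : ℤ, ENNReal.ofReal (|(j:ℝ)| ^ ((α - 1 + s') * q1)) with hK1def
    set K2 := ∑' j : ℤ, ENNReal.ofReal (|(j:ℝ)| ^ ((α - 1) * q2)) with hK2def
    have hK1 : K1 ≠ ⊤ := sum_rpow_int_ne_top hβ1q1
    have hK2 : K2 ≠ ⊤ := sum_rpow_int_ne_top hβ2q2
    set KA := (K1 ^ (2/q1) * K2 ^ (2/q2)) *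
      (ENNReal.ofReal 9 * ENNReal.ofReal 9) with hKAdef
    have hKA : KA ≠ ⊤ := by
      rw [hKAdef]
      refine ENNReal.mul_ne_top (ENNReal.mul_ne_top ?_ ?_)
        (ENNReal.mul_ne_top ENNReal.ofReal_ne_top ENNReal.ofReal_ne_top)
      · exact ENNReal.rpow_ne_top_of_nonneg (by positivity) hK1
      · exact ENNReal.rpow_ne_top_of_nonneg (by positivity) hK2
    refine ⟨KA.toReal ^ ((1:ℝ)/2), fun a hS => ?_⟩
    have hsum1 : ∀ n : ℤ, Summable (fun k : ℤ => ‖Tm a n k‖) := fun n =>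
      Tm_summable (by linarith) (by linarith) hS n
    refine ⟨fun n => hsum1 n, ?_⟩
    -- the weighted square sums
    have hS0 : 0 ≤ ∑' k : ℤ, (1 + 2 * |(k:ℝ)|) ^ (-(2*α)) * ‖a k‖^2 :=
      tsum_nonneg (fun k => by positivity)
    set ES := ∑' k : ℤ, ENNReal.ofReal (cf α a k ^ 2) with hESdef
    have hES : ES = ENNReal.ofReal (∑' k : ℤ, (1 + 2 * |(k:ℝ)|) ^ (-(2*α)) * ‖a k‖^2) := by
      rw [hESdef, ENNReal.ofReal_tsum_of_nonneg (fun k => by positivity) hS]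
      exact tsum_congr (fun k => by rw [cf_sq])
    set U1 : ℤ → ℝ≥0∞ := fun j => ENNReal.ofReal (3 * (cf α a j * |(j:ℝ)| ^ (α - 1 + s')))
      with hU1def
    set U2 : ℤ → ℝ≥0∞ := fun j => ENNReal.ofReal (3 * (cf α a j * |(j:ℝ)| ^ (α - 1)))
      with hU2def
    have hpt : ∀ n k : ℤ, ENNReal.ofReal ((1 + 2 * |(n:ℝ)|) ^ s') *
        ENNReal.ofReal (RG α a n k) ≤ U1 (n - k) * U2 (n + k) := by
      intro n k
      have hcnk := cf_nonneg α a (n - k)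
      have hcnk' := cf_nonneg α a (n + k)
      calc ENNReal.ofReal ((1 + 2 * |(n:ℝ)|) ^ s') * ENNReal.ofReal (RG α a n k)
          = ENNReal.ofReal ((1 + 2 * |(n:ℝ)|) ^ s' * RG α a n k) :=
            (ENNReal.ofReal_mul (by positivity)).symm
        _ ≤ ENNReal.ofReal ((3 * (cf α a (n - k) * |((n - k : ℤ):ℝ)| ^ (α - 1 + s'))) *
              (3 * (cf α a (n + k) * |((n + k : ℤ):ℝ)| ^ (α - 1)))) :=
            ENNReal.ofReal_le_ofReal
              (hHP_A hα0 hα hs (by rw [hs'def]; linarith) n k)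
        _ = U1 (n - k) * U2 (n + k) := by
            rw [hU1def, hU2def, ENNReal.ofReal_mul (by positivity)]
    have hper : ∀ n : ℤ,
        ENNReal.ofReal ((1 + 2 * |(n:ℝ)|) ^ (2 * s') *
          ‖(1 / (π:ℂ) ^ 2) * ∑' k : ℤ, Tm a n k‖ ^ 2)
        ≤ (∑' j : ℤ, U1 j * U2 (2 * n - j)) ^ (2:ℝ) := by
      intro n
      rw [helper_sq (by positivity) s' _ (norm_nonneg _)]
      apply ENNReal.rpow_le_rpow ?_ (by norm_num)
      exact core_bound (by linarith) (by linarith) hS _ U1 U2 hpt n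
    have hyoung : ∑' m : ℤ, (∑' j : ℤ, U1 j * U2 (m - j)) ^ (2:ℝ) ≤
        ((∑' j : ℤ, U1 j ^ p) ^ (1/p) * (∑' j : ℤ, U2 j ^ q) ^ (1/q)) ^ (2:ℝ) := by
      have hy := young hp1 hq1 hp2 hq2 hpq U1 U2
      have h := ENNReal.rpow_le_rpow hy (by norm_num : (0:ℝ) ≤ 2)
      rwa [← ENNReal.rpow_mul, show (1/(2:ℝ)) * 2 = 1 by norm_num, ENNReal.rpow_one] at h
    have hX1 : (∑' j : ℤ, U1 j ^ p) ≤ (ENNReal.ofReal 9 * ES) ^ (p/2) * K1 ^ (p/q1) := by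
      have hrw : ∀ j : ℤ, U1 j = ENNReal.ofReal (3 * cf α a j) *
          ENNReal.ofReal (|(j:ℝ)| ^ (α - 1 + s')) := by
        intro j
        have hc := cf_nonneg α a j
        rw [hU1def, ← ENNReal.ofReal_mul (by positivity)]
        congr 1
        ring
      calc ∑' j : ℤ, U1 j ^ p
          = ∑' j : ℤ, (ENNReal.ofReal (3 * cf α a j) *
              ENNReal.ofReal (|(j:ℝ)| ^ (α - 1 + s'))) ^ p :=
            tsum_congr (fun j => by rw [hrw j])
        _ ≤ (∑' j : ℤ, (ENNReal.ofReal (3 * cf α a j)) ^ (2:ℝ)) ^ (p/2) *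
            (∑' j : ℤ, (ENNReal.ofReal (|(j:ℝ)| ^ (α - 1 + s'))) ^ q1) ^ (p/q1) :=
            lp_mul hp1 hp2 hq10 hq1inv _ _
        _ = (ENNReal.ofReal 9 * ES) ^ (p/2) * K1 ^ (p/q1) := by
            congr 2
            · rw [hESdef, ← ENNReal.tsum_mul_left]
              apply tsum_congr
              intro j
              have hc := cf_nonneg α a j
              rw [ENNReal.ofReal_rpow_of_nonneg (by positivity) (by norm_num),
                ← ENNReal.ofReal_mul (by norm_num)]
              congr 1
              rw [show ((2:ℝ)) = ((2:ℕ):ℝ) by norm_num, Real.rpow_natCast]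
              ring
            · rw [hK1def]
              apply tsum_congr
              intro j
              rw [ENNReal.ofReal_rpow_of_nonneg (by positivity) hq10.le,
                ← Real.rpow_mul (abs_nonneg _)]
    have hX2 : (∑' j : ℤ, U2 j ^ q) ≤ (ENNReal.ofReal 9 * ES) ^ (q/2) * K2 ^ (q/q2) := by
      have hrw : ∀ j : ℤ, U2 j = ENNReal.ofReal (3 * cf α a j) *
          ENNReal.ofReal (|(j:ℝ)| ^ (α - 1)) := by
        intro j
        have hc := cf_nonneg α a j
        rw [hU2def, ← ENNReal.ofReal_mul (by positivity)]
        congr 1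
        ring
      calc ∑' j : ℤ, U2 j ^ q
          = ∑' j : ℤ, (ENNReal.ofReal (3 * cf α a j) *
              ENNReal.ofReal (|(j:ℝ)| ^ (α - 1))) ^ q :=
            tsum_congr (fun j => by rw [hrw j])
        _ ≤ (∑' j : ℤ, (ENNReal.ofReal (3 * cf α a j)) ^ (2:ℝ)) ^ (q/2) *
            (∑' j : ℤ, (ENNReal.ofReal (|(j:ℝ)| ^ (α - 1))) ^ q2) ^ (q/q2) :=
            lp_mul hq1 hq2 hq20 hq2inv _ _
        _ = (ENNReal.ofReal 9 * ES) ^ (q/2) * K2 ^ (q/q2) := by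
            congr 2
            · rw [hESdef, ← ENNReal.tsum_mul_left]
              apply tsum_congr
              intro j
              have hc := cf_nonneg α a j
              rw [ENNReal.ofReal_rpow_of_nonneg (by positivity) (by norm_num),
                ← ENNReal.ofReal_mul (by norm_num)]
              congr 1
              rw [show ((2:ℝ)) = ((2:ℕ):ℝ) by norm_num, Real.rpow_natCast]
              ring
            · rw [hK2def]
              apply tsum_congr
              intro j
              rw [ENNReal.ofReal_rpow_of_nonneg (by positivity) hq20.le,
                ← Real.rpow_mul (abs_nonneg _)]
    have hbound : ∑' n : ℤ, ENNReal.ofReal ((1 + 2 * |(n:ℝ)|) ^ (2 * s') *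
        ‖(1 / (π:ℂ) ^ 2) * ∑' k : ℤ, Tm a n k‖ ^ 2) ≤
        KA * (ENNReal.ofReal (∑' k : ℤ, (1 + 2 * |(k:ℝ)|) ^ (-(2*α)) * ‖a k‖^2)) ^ (2:ℝ) := by
      calc ∑' n : ℤ, ENNReal.ofReal ((1 + 2 * |(n:ℝ)|) ^ (2 * s') *
            ‖(1 / (π:ℂ) ^ 2) * ∑' k : ℤ, Tm a n k‖ ^ 2)
          ≤ ∑' n : ℤ, (∑' j : ℤ, U1 j * U2 (2 * n - j)) ^ (2:ℝ) :=
            ENNReal.tsum_le_tsum hper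
        _ ≤ ∑' m : ℤ, (∑' j : ℤ, U1 j * U2 (m - j)) ^ (2:ℝ) :=
            tsum_double_le (fun m => (∑' j : ℤ, U1 j * U2 (m - j)) ^ (2:ℝ))
        _ ≤ ((∑' j : ℤ, U1 j ^ p) ^ (1/p) * (∑' j : ℤ, U2 j ^ q) ^ (1/q)) ^ (2:ℝ) := hyoung
        _ ≤ (K1 ^ (2/q1) * K2 ^ (2/q2)) * ((ENNReal.ofReal 9 * ES) * (ENNReal.ofReal 9 * ES)) :=
            combine_A hp0 hq0 hq10 hq20 hX1 hX2
        _ = KA * (ENNReal.ofReal (∑' k : ℤ, (1 + 2 * |(k:ℝ)|) ^ (-(2*α)) * ‖a k‖^2)) ^ (2:ℝ) := by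
            rw [hKAdef, hES, show ((2:ℝ)) = ((2:ℕ):ℝ) by norm_num, ENNReal.rpow_natCast]
            ring
    exact finish_conv hS0 _ (fun n => by positivity) hKA hbound le_rfl
  · -- Branch B : the weight exponent s' is negative
    push_neg at hs
    set s' := 3 / 2 - 2 * α - δ with hs'def
    have hsneg : s' < 0 := hs
    set γ := (max (2*α - 3/2) 0 + min (-s') (1/2)) / 2 with hγdef
    have hmax1 : 2*α - 3/2 ≤ max (2*α - 3/2) 0 := le_max_left _ _
    have hmax0 : (0:ℝ) ≤ max (2*α - 3/2) 0 := le_max_right _ _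
    have hmm : max (2*α - 3/2) 0 < min (-s') (1/2) := by
      apply max_lt (lt_min ?_ ?_) (lt_min ?_ ?_)
      · rw [hs'def]; linarith
      · linarith
      · linarith
      · norm_num
    have hmin1 : min (-s') (1/2) ≤ -s' := min_le_left _ _
    have hmin2 : min (-s') (1/2) ≤ (1:ℝ)/2 := min_le_right _ _
    have hγ0 : 0 < γ := by
      rw [hγdef]
      have := lt_of_le_of_lt hmax0 hmm
      linarith
    have hγh : γ < 1/2 := by rw [hγdef]; linarith
    have hγs : γ < -s' := by rw [hγdef]; linarith
    have hγα : 2*α - 3/2 < γ := by rw [hγdef]; linarith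
    set r := 1/(3/4 - γ/2) with hrdef
    set t := 1/(1/2 - γ) with htdef
    set qw := 1/(1/4 - γ/2) with hqwdef
    set q3 := 1/γ with hq3def
    have hrd0 : (0:ℝ) < 3/4 - γ/2 := by linarith
    have htd0 : (0:ℝ) < 1/2 - γ := by linarith
    have hqwd0 : (0:ℝ) < 1/4 - γ/2 := by linarith
    have hr_inv : 1/r = 3/4 - γ/2 := by rw [hrdef, one_div_one_div]
    have ht_inv : 1/t = 1/2 - γ := by rw [htdef, one_div_one_div]
    have hr0 : 0 < r := by rw [hrdef]; positivity
    have ht0 : 0 < t := by rw [htdef]; positivity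
    have hq30 : 0 < q3 := by rw [hq3def]; positivity
    have hqw0 : 0 < qw := by rw [hqwdef]; positivity
    have hr1 : 1 ≤ r := by rw [hrdef, le_div_iff₀ hrd0, one_mul]; linarith
    have hr2 : r < 2 := by rw [hrdef, div_lt_iff₀ hrd0]; linarith
    have hrt : r < t := by
      rw [hrdef, htdef]
      exact one_div_lt_one_div_of_lt htd0 (by linarith)
    have hrrt : 1/r + 1/r = 1 + 1/t := by rw [hr_inv, ht_inv]; ring
    have hqwinv : 1/qw = 1/r - 1/2 := by rw [hqwdef, one_div_one_div, hr_inv]; ring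
    have hβq : (α - 1) * qw < -1 := by
      rw [hqwdef, mul_one_div, div_lt_iff₀ hqwd0]
      linarith
    have hσ : s' * q3 < -1 := by
      rw [hq3def, mul_one_div, div_lt_iff₀ hγ0]
      linarith
    have hconj : (q3/2).HolderConjugate (t/2) := by
      rw [Real.holderConjugate_iff]; constructor
      · rw [hq3def, div_div, lt_div_iff₀ (by positivity), one_mul]
        linarith
      · rw [hq3def, htdef, div_div, div_div]
        rw [show (1/(γ*2))⁻¹ = γ*2 by rw [one_div, inv_inv],
          show (1/((1/2-γ)*2))⁻¹ = (1/2-γ)*2 by rw [one_div, inv_inv]]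
        ring
    set Kw := ∑' j : ℤ, ENNReal.ofReal (|(j:ℝ)| ^ ((α - 1) * qw)) with hKwdef
    set K3 := ∑' n : ℤ, ENNReal.ofReal ((1 + 2 * |(n:ℝ)|) ^ (s' * q3)) with hK3def
    have hKw : Kw ≠ ⊤ := sum_rpow_int_ne_top hβq
    have hK3 : K3 ≠ ⊤ := sum_weight_ne_top hσ
    set KB := K3 ^ (2/q3) *
      ((Kw ^ (2/qw) * Kw ^ (2/qw)) * (ENNReal.ofReal 9 * ENNReal.ofReal 9)) with hKBdef
    have hKB : KB ≠ ⊤ := by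
      rw [hKBdef]
      refine ENNReal.mul_ne_top (ENNReal.rpow_ne_top_of_nonneg (by positivity) hK3)
        (ENNReal.mul_ne_top (ENNReal.mul_ne_top ?_ ?_)
          (ENNReal.mul_ne_top ENNReal.ofReal_ne_top ENNReal.ofReal_ne_top))
      · exact ENNReal.rpow_ne_top_of_nonneg (by positivity) hKw
      · exact ENNReal.rpow_ne_top_of_nonneg (by positivity) hKw
    refine ⟨KB.toReal ^ ((1:ℝ)/2), fun a hS => ?_⟩
    have hsum1 : ∀ n : ℤ, Summable (fun k : ℤ => ‖Tm a n k‖) := fun n =>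
      Tm_summable (by linarith) (by linarith) hS n
    refine ⟨fun n => hsum1 n, ?_⟩
    have hS0 : 0 ≤ ∑' k : ℤ, (1 + 2 * |(k:ℝ)|) ^ (-(2*α)) * ‖a k‖^2 :=
      tsum_nonneg (fun k => by positivity)
    set ES := ∑' k : ℤ, ENNReal.ofReal (cf α a k ^ 2) with hESdef
    have hES : ES = ENNReal.ofReal (∑' k : ℤ, (1 + 2 * |(k:ℝ)|) ^ (-(2*α)) * ‖a k‖^2) := by
      rw [hESdef, ENNReal.ofReal_tsum_of_nonneg (fun k => by positivity) hS]
      exact tsum_congr (fun k => by rw [cf_sq])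
    set U0 : ℤ → ℝ≥0∞ := fun j => ENNReal.ofReal (3 * (cf α a j * |(j:ℝ)| ^ (α - 1)))
      with hU0def
    have hpt : ∀ n k : ℤ, (1:ℝ≥0∞) * ENNReal.ofReal (RG α a n k) ≤ U0 (n - k) * U0 (n + k) := by
      intro n k
      have hc1 := cf_nonneg α a (n - k)
      have hc2 := cf_nonneg α a (n + k)
      rw [one_mul]
      calc ENNReal.ofReal (RG α a n k)
          ≤ ENNReal.ofReal ((3 * (cf α a (n - k) * |((n - k : ℤ):ℝ)| ^ (α - 1))) *
              (3 * (cf α a (n + k) * |((n + k : ℤ):ℝ)| ^ (α - 1)))) :=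
            ENNReal.ofReal_le_ofReal (hHP_B (by linarith) (by linarith) n k)
        _ = U0 (n - k) * U0 (n + k) := by
            rw [hU0def, ENNReal.ofReal_mul (by positivity)]
    have hcore : ∀ n : ℤ, ENNReal.ofReal ‖(1 / (π:ℂ) ^ 2) * ∑' k : ℤ, Tm a n k‖ ≤
        ∑' j : ℤ, U0 j * U0 (2 * n - j) := by
      intro n
      have h := core_bound (by linarith) (by linarith) hS (fun _ => 1) U0 U0 hpt n
      rwa [one_mul] at h
    have hper : ∀ n : ℤ,
        ENNReal.ofReal ((1 + 2 * |(n:ℝ)|) ^ (2 * s') *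
          ‖(1 / (π:ℂ) ^ 2) * ∑' k : ℤ, Tm a n k‖ ^ 2)
        ≤ (ENNReal.ofReal ((1 + 2 * |(n:ℝ)|) ^ s')) ^ (2:ℝ) *
          (∑' j : ℤ, U0 j * U0 (2 * n - j)) ^ (2:ℝ) := by
      intro n
      rw [helper_sq (by positivity) s' _ (norm_nonneg _),
        ← ENNReal.mul_rpow_of_nonneg _ _ (by norm_num : (0:ℝ) ≤ 2)]
      apply ENNReal.rpow_le_rpow ?_ (by norm_num)
      exact mul_le_mul_right (hcore n) _
    -- Hölder in n, splitting weight and convolution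
    have hhold : ∑' n : ℤ, (ENNReal.ofReal ((1 + 2 * |(n:ℝ)|) ^ s')) ^ (2:ℝ) *
          (∑' j : ℤ, U0 j * U0 (2 * n - j)) ^ (2:ℝ) ≤
        K3 ^ (2/q3) * (∑' n : ℤ, (∑' j : ℤ, U0 j * U0 (2 * n - j)) ^ t) ^ (2/t) := by
      have h := holder2 hconj
        (fun n => (ENNReal.ofReal ((1 + 2 * |(n:ℝ)|) ^ s')) ^ (2:ℝ))
        (fun n => (∑' j : ℤ, U0 j * U0 (2 * n - j)) ^ (2:ℝ))
      have e1 : ∀ n : ℤ, ((ENNReal.ofReal ((1 + 2 * |(n:ℝ)|) ^ s')) ^ (2:ℝ)) ^ (q3/2) =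
          ENNReal.ofReal ((1 + 2 * |(n:ℝ)|) ^ (s' * q3)) := by
        intro n
        rw [← ENNReal.rpow_mul, show (2:ℝ) * (q3/2) = q3 by ring,
          ENNReal.ofReal_rpow_of_nonneg (by positivity) hq30.le,
          ← Real.rpow_mul (by positivity)]
      have e2 : ∀ n : ℤ, ((∑' j : ℤ, U0 j * U0 (2 * n - j)) ^ (2:ℝ)) ^ (t/2) =
          (∑' j : ℤ, U0 j * U0 (2 * n - j)) ^ t := by
        intro n
        rw [← ENNReal.rpow_mul, show (2:ℝ) * (t/2) = t by ring]
      rw [tsum_congr e1, tsum_congr e2, one_div_div, one_div_div] at h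
      rw [← hK3def] at h
      exact h
    have hX0 : (∑' j : ℤ, U0 j ^ r) ≤ (ENNReal.ofReal 9 * ES) ^ (r/2) * Kw ^ (r/qw) := by
      have hrw : ∀ j : ℤ, U0 j = ENNReal.ofReal (3 * cf α a j) *
          ENNReal.ofReal (|(j:ℝ)| ^ (α - 1)) := by
        intro j
        have hc := cf_nonneg α a j
        rw [hU0def, ← ENNReal.ofReal_mul (by positivity)]
        ring_nf
      calc ∑' j : ℤ, U0 j ^ r
          = ∑' j : ℤ, (ENNReal.ofReal (3 * cf α a j) *
              ENNReal.ofReal (|(j:ℝ)| ^ (α - 1))) ^ r :=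
            tsum_congr (fun j => by rw [hrw j])
        _ ≤ (∑' j : ℤ, (ENNReal.ofReal (3 * cf α a j)) ^ (2:ℝ)) ^ (r/2) *
            (∑' j : ℤ, (ENNReal.ofReal (|(j:ℝ)| ^ (α - 1))) ^ qw) ^ (r/qw) :=
            lp_mul hr1 hr2 hqw0 hqwinv _ _
        _ = (ENNReal.ofReal 9 * ES) ^ (r/2) * Kw ^ (r/qw) := by
            congr 2
            · rw [hESdef, ← ENNReal.tsum_mul_left]
              apply tsum_congr
              intro j
              have hc := cf_nonneg α a j
              rw [ENNReal.ofReal_rpow_of_nonneg (by positivity) (by norm_num),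
                ← ENNReal.ofReal_mul (by norm_num)]
              congr 1
              rw [show ((2:ℝ)) = ((2:ℕ):ℝ) by norm_num, Real.rpow_natCast]
              ring
            · rw [hKwdef]
              apply tsum_congr
              intro j
              rw [ENNReal.ofReal_rpow_of_nonneg (by positivity) hqw0.le,
                ← Real.rpow_mul (abs_nonneg _)]
    have hgt : (∑' n : ℤ, (∑' j : ℤ, U0 j * U0 (2 * n - j)) ^ t) ^ (2/t) ≤
        ((Kw ^ (2/qw) * Kw ^ (2/qw)) * ((ENNReal.ofReal 9 * ES) * (ENNReal.ofReal 9 * ES))) := by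
      have hdub : ∑' n : ℤ, (∑' j : ℤ, U0 j * U0 (2 * n - j)) ^ t ≤
          ∑' m : ℤ, (∑' j : ℤ, U0 j * U0 (m - j)) ^ t :=
        tsum_double_le (fun m => (∑' j : ℤ, U0 j * U0 (m - j)) ^ t)
      have hy := young hr1 hr1 hrt hrt hrrt U0 U0
      have hy2 : (∑' m : ℤ, (∑' j : ℤ, U0 j * U0 (m - j)) ^ t) ^ (2/t) ≤
          ((∑' j : ℤ, U0 j ^ r) ^ (1/r) * (∑' j : ℤ, U0 j ^ r) ^ (1/r)) ^ (2:ℝ) := by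
        have h := ENNReal.rpow_le_rpow hy (by norm_num : (0:ℝ) ≤ 2)
        rwa [← ENNReal.rpow_mul, show (1/t) * 2 = 2/t by ring] at h
      calc (∑' n : ℤ, (∑' j : ℤ, U0 j * U0 (2 * n - j)) ^ t) ^ (2/t)
          ≤ (∑' m : ℤ, (∑' j : ℤ, U0 j * U0 (m - j)) ^ t) ^ (2/t) :=
            ENNReal.rpow_le_rpow hdub (by positivity)
        _ ≤ ((∑' j : ℤ, U0 j ^ r) ^ (1/r) * (∑' j : ℤ, U0 j ^ r) ^ (1/r)) ^ (2:ℝ) := hy2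
        _ ≤ (Kw ^ (2/qw) * Kw ^ (2/qw)) * ((ENNReal.ofReal 9 * ES) * (ENNReal.ofReal 9 * ES)) :=
            combine_A hr0 hr0 hqw0 hqw0 hX0 hX0
    have hbound : ∑' n : ℤ, ENNReal.ofReal ((1 + 2 * |(n:ℝ)|) ^ (2 * s') *
        ‖(1 / (π:ℂ) ^ 2) * ∑' k : ℤ, Tm a n k‖ ^ 2) ≤
        KB * (ENNReal.ofReal (∑' k : ℤ, (1 + 2 * |(k:ℝ)|) ^ (-(2*α)) * ‖a k‖^2)) ^ (2:ℝ) := by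
      calc ∑' n : ℤ, ENNReal.ofReal ((1 + 2 * |(n:ℝ)|) ^ (2 * s') *
            ‖(1 / (π:ℂ) ^ 2) * ∑' k : ℤ, Tm a n k‖ ^ 2)
          ≤ ∑' n : ℤ, (ENNReal.ofReal ((1 + 2 * |(n:ℝ)|) ^ s')) ^ (2:ℝ) *
              (∑' j : ℤ, U0 j * U0 (2 * n - j)) ^ (2:ℝ) := ENNReal.tsum_le_tsum hper
        _ ≤ K3 ^ (2/q3) * (∑' n : ℤ, (∑' j : ℤ, U0 j * U0 (2 * n - j)) ^ t) ^ (2/t) := hhold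
        _ ≤ K3 ^ (2/q3) *
            ((Kw ^ (2/qw) * Kw ^ (2/qw)) * ((ENNReal.ofReal 9 * ES) * (ENNReal.ofReal 9 * ES))) :=
            mul_le_mul_right hgt _
        _ = KB * (ENNReal.ofReal (∑' k : ℤ, (1 + 2 * |(k:ℝ)|) ^ (-(2*α)) * ‖a k‖^2)) ^ (2:ℝ) := by
            rw [hKBdef, hES, show ((2:ℝ)) = ((2:ℕ):ℝ) by norm_num, ENNReal.rpow_natCast]
            ring
    exact finish_conv hS0 _ (fun n => by positivity) hKB hbound le_rfl
end
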